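/- arXiv:0805.1147 — 4 statements merged into one kernel-verified Lean document; each statement's English description precedes it below -/
import Mathlib

section
/- Define the parabolic type subalgebra Ã^α as the R-span of {c^λ_{s,t} : (s,t) ∈ Ĩ(λ,ε) × J̃(λ,ε), (λ,ε) ∈ Ω}, where Ĩ(λ,0) = J̃(λ,0) = T⁺_α(λ), Ĩ(λ,1) = T⁻_α(λ), J̃(λ,1) = T(λ). Then Ã^α is a subalgebra of A containing A^α, and Ã^α is a standardly based algebra (in the sense of Du–Rui) with standard basis Z̃^α, with respect to the poset Ω. -/
open MulOpposite

noncomputable section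

universe u

section CompFactors

variable (A : Type u) [Ring A]

/-- The `i`-th factor of a series of submodules. -/
abbrev CompSeriesFactor {M : Type u} [AddCommGroup M] [Module A M]
    (s : CompositionSeries (Submodule A M)) (i : Fin s.length) : Type u :=
  ↥(s i.succ) ⧸ Submodule.comap (s i.succ).subtype (s i.castSucc)

open Classical in
/-- The multiplicity of `N` among the composition factors of `M` (returning `0` if `M`
has no composition series); by the Jordan–Hölder theorem this does not depend on the
choice of composition series. -/
def compMult (M : Type u) [AddCommGroup M] [Module A M]
    (N : Type u) [AddCommGroup N] [Module A N] : ℕ :=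
  if h : ∃ s : CompositionSeries (Submodule A M), s.head = ⊥ ∧ s.last = ⊤ then
    (Finset.univ.filter fun i : Fin h.choose.length =>
      Nonempty (CompSeriesFactor A h.choose i ≃ₗ[A] N)).card
  else 0

/-- `N` is (isomorphic to) a composition factor, i.e. a simple subquotient, of `M`. -/
def IsCompFactor (M N : Type u) [AddCommGroup M] [Module A M]
    [AddCommGroup N] [Module A N] : Prop :=
  ∃ p q : Submodule A M, p ≤ q ∧
    IsSimpleModule A (↥q ⧸ Submodule.comap q.subtype p) ∧
    Nonempty ((↥q ⧸ Submodule.comap q.subtype p) ≃ₗ[A] N)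

/-- `M₁` and `M₂` have a common composition factor. -/
def ShareFactor (M₁ M₂ : Type u) [AddCommGroup M₁] [Module A M₁]
    [AddCommGroup M₂] [Module A M₂] : Prop :=
  ∃ (p q : Submodule A M₁) (p' q' : Submodule A M₂), p ≤ q ∧ p' ≤ q' ∧
    IsSimpleModule A (↥q ⧸ Submodule.comap q.subtype p) ∧
    Nonempty ((↥q ⧸ Submodule.comap q.subtype p) ≃ₗ[A]
      (↥q' ⧸ Submodule.comap q'.subtype p'))

/-- `e` is a primitive central idempotent (a block idempotent) of `A`. -/
def IsPrimCentralIdem (e : A) : Prop :=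
  IsIdempotentElem e ∧ e ∈ Set.center A ∧ e ≠ 0 ∧
    ∀ f g : A, IsIdempotentElem f → IsIdempotentElem g → f ∈ Set.center A →
      g ∈ Set.center A → f * g = 0 → e = f + g → f = 0 ∨ g = 0

/-- A module belongs to the block of the central idempotent `e` when `e` acts as
the identity on it. -/
def InBlock (e : A) (M : Type u) [AddCommGroup M] [Module A M] : Prop :=
  ∀ m : M, e • m = m

/-- `P` is a projective cover of `L`. -/
def IsProjCover (P L : Type u) [AddCommGroup P] [Module A P]
    [AddCommGroup L] [Module A L] : Prop :=
  Module.Projective A P ∧ ∃ f : P →ₗ[A] L, Function.Surjective f ∧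
    ∀ N : Submodule A P, N ⊔ LinearMap.ker f = ⊤ → N = ⊤

end CompFactors

/-- The bilinear form on `ι → R` induced by a matrix `φ`. -/
def formSum {R ι : Type u} [CommRing R] [Fintype ι] (φ : ι → ι → R) (x y : ι → R) : R :=
  ∑ s, ∑ t, x s * φ s t * y t

section Cellular

variable (R A : Type u) [CommRing R] [Ring A] [Algebra R A]
variable (Λp : Type u) [PartialOrder Λp] (T : Λp → Type u) [∀ l, Fintype (T l)]

/-- A cell datum (Graham–Lehrer) for the `R`-algebra `A`: a cellular basis
`c l s t` indexed by pairs of elements of `T l` for `l` in the poset `Λp`, an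
anti-automorphism `star` swapping the two indices, and structure constants
`coeff` for right multiplication, acting on the second index modulo higher terms. -/
structure CellDatum where
  c : ∀ l, T l → T l → A
  basis : Module.Basis ((l : Λp) × (T l × T l)) R A
  basis_eq : ∀ l s t, basis ⟨l, (s, t)⟩ = c l s t
  star : A →ₗ[R] A
  star_mul : ∀ a b, star (a * b) = star b * star a
  star_c : ∀ l s t, star (c l s t) = c l t s
  coeff : ∀ l, T l → A → T l → R
  mul_rule : ∀ (l) (s t : T l) (a : A),
    c l s t * a - ∑ v, coeff l t a v • c l s v ∈
      Submodule.span R {x : A | ∃ l' s' t', l < l' ∧ x = c l' s' t'}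

variable {R A Λp T}

namespace CellDatum

variable (D : CellDatum R A Λp T)

/-- The span of the cellular basis elements with index strictly above `l`. -/
def Aup (l : Λp) : Submodule R A :=
  Submodule.span R {x : A | ∃ l' s' t', l < l' ∧ x = D.c l' s' t'}

/-- The span of the cellular basis elements with index in `P`. -/
def cellSpan (P : Set Λp) : Submodule R A :=
  Submodule.span R {x : A | ∃ l s t, l ∈ P ∧ x = D.c l s t}

/-- The data of right standard (cell) modules: each `T l → R` is a right `A`-module
(i.e. a module over `Aᵐᵒᵖ`), the action is `R`-bilinear, and on the standard basis it is
given by the structure constants of the cell datum. -/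
def RightStd [∀ l, DecidableEq (T l)] [∀ l, Module Aᵐᵒᵖ (T l → R)] : Prop :=
  (∀ (l : Λp) (r : R) (a : Aᵐᵒᵖ) (x : T l → R), a • (r • x) = r • (a • x)) ∧
  (∀ (l : Λp) (t : T l) (a : A),
    (op a) • (Pi.single t 1 : T l → R) = fun v => D.coeff l t a v)

/-- The data of left standard (cell) modules. -/
def LeftStd [∀ l, DecidableEq (T l)] [∀ l, Module A (T l → R)] : Prop :=
  (∀ (l : Λp) (r : R) (a : A) (x : T l → R), a • (r • x) = r • (a • x)) ∧
  (∀ (l : Λp) (t : T l) (a : A),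
    a • (Pi.single t 1 : T l → R) = fun v => D.coeff l t (D.star a) v)

/-- `φ` is the matrix of the canonical bilinear form on the standard modules:
`c l u s * c l t v ≡ φ l s t • c l u v` modulo `A^{∨l}`. -/
def FormData (φ : ∀ l, T l → T l → R) : Prop :=
  ∀ (l : Λp) (s t u v : T l), D.c l u s * D.c l t v - φ l s t • D.c l u v ∈ D.Aup l

section Idem

variable {Λt M X : Type u} [PartialOrder Λt] [PartialOrder X] [Fintype M]

/-- Assumptions (A1)–(A4): `ι : Λp → Λt` realizes the cell poset inside the
bigger poset `Λt`, `κ : M → Λt` realizes the index set of the orthogonal idempotent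
decomposition `1 = ∑ e μ`, each `e μ` lies in the span of the `c l s t` with
`ι l ≥ κ μ`, and every column of the cellular basis is fixed by some `e μ`. -/
structure IdemData (ι : Λp → Λt) (κ : M → Λt) (e : M → A) : Prop where
  order_iff : ∀ l l', ι l ≤ ι l' ↔ l ≤ l'
  kappa_inj : Function.Injective κ
  ne_zero : ∀ μ, e μ ≠ 0
  idem : ∀ μ, e μ * e μ = e μ
  orth : ∀ μ ν, μ ≠ ν → e μ * e ν = 0
  sum_one : ∑ μ, e μ = 1
  mem_span : ∀ μ, e μ ∈ Submodule.span R {x : A | ∃ l s t, κ μ ≤ ι l ∧ x = D.c l s t}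
  exists_idem : ∀ (l) (t : T l), ∃ μ, (∀ s, D.c l s t * e μ = D.c l s t) ∧
    (∀ u, e μ * D.c l t u = D.c l t u)

/-- `T(λ,μ)`: the indices `t` whose column (resp. row) of the cellular basis is fixed
by right (resp. left) multiplication by `e μ`. -/
def Tset (e : M → A) (l : Λp) (μ : M) : Set (T l) :=
  {t | (∀ s, D.c l s t * e μ = D.c l s t) ∧ (∀ u, e μ * D.c l t u = D.c l t u)}

/-- `T⁺_α(λ)`. -/
def Tplus (e : M → A) (ι : Λp → Λt) (κ : M → Λt) (α : Λt → X) (l : Λp) : Set (T l) :=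
  {t | ∃ μ, t ∈ D.Tset e l μ ∧ α (ι l) = α (κ μ)}

/-- `T⁻_α(λ)`. -/
def Tminus (e : M → A) (ι : Λp → Λt) (κ : M → Λt) (α : Λt → X) (l : Λp) : Set (T l) :=
  {t | ∃ μ, t ∈ D.Tset e l μ ∧ α (κ μ) < α (ι l)}

/-- `I(λ,ε)`: `T⁺_α(λ)` for `ε = false` and `T⁻_α(λ)` for `ε = true`. -/
def Iset (e : M → A) (ι : Λp → Λt) (κ : M → Λt) (α : Λt → X) (l : Λp) : Bool → Set (T l)
  | false => D.Tplus e ι κ α l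
  | true => D.Tminus e ι κ α l

/-- `J̃(λ,ε)`: `T⁺_α(λ)` for `ε = false` and all of `T(λ)` for `ε = true`. -/
def Jset (e : M → A) (ι : Λp → Λt) (κ : M → Λt) (α : Λt → X) (l : Λp) : Bool → Set (T l)
  | false => D.Tplus e ι κ α l
  | true => Set.univ

/-- The Levi type subalgebra `A^α` (as a submodule). -/
def levi (e : M → A) (ι : Λp → Λt) (κ : M → Λt) (α : Λt → X) : Submodule R A :=
  Submodule.span R {x : A | ∃ l ε s t, s ∈ D.Iset e ι κ α l ε ∧ t ∈ D.Iset e ι κ α l ε ∧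
    x = D.c l s t}

/-- The parabolic type subalgebra `Ã^α` (as a submodule). -/
def parab (e : M → A) (ι : Λp → Λt) (κ : M → Λt) (α : Λt → X) : Submodule R A :=
  Submodule.span R {x : A | ∃ l ε s t, s ∈ D.Iset e ι κ α l ε ∧ t ∈ D.Jset e ι κ α l ε ∧
    x = D.c l s t}

/-- The span of the elements of the cellular basis of `A^α` of index strictly
above `(l,ε)` in `Ω`. -/
def upperOm (e : M → A) (ι : Λp → Λt) (κ : M → Λt) (α : Λt → X) (p : Λp × Bool) :
    Submodule R A :=
  Submodule.span R {x : A | ∃ (q : Λp × Bool) (s t : T q.1),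
    ((p.2 < q.2) ∨ (p.2 = q.2 ∧ p.1 < q.1)) ∧
    s ∈ D.Iset e ι κ α q.1 q.2 ∧ t ∈ D.Iset e ι κ α q.1 q.2 ∧ x = D.c q.1 s t}

/-- The span of the elements of the standard basis of `Ã^α` of index strictly
above `(l,ε)` in `Ω`. -/
def upperOmParab (e : M → A) (ι : Λp → Λt) (κ : M → Λt) (α : Λt → X) (p : Λp × Bool) :
    Submodule R A :=
  Submodule.span R {x : A | ∃ (q : Λp × Bool) (s t : T q.1),
    ((p.2 < q.2) ∨ (p.2 = q.2 ∧ p.1 < q.1)) ∧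
    s ∈ D.Iset e ι κ α q.1 q.2 ∧ t ∈ D.Jset e ι κ α q.1 q.2 ∧ x = D.c q.1 s t}

end Idem

end CellDatum

end Cellular
section Aux

set_option linter.unusedSectionVars false

open Submodule

variable {R A : Type u} [CommRing R] [Ring A] [Algebra R A]
variable {Λp : Type u} [PartialOrder Λp] [Fintype Λp]
variable {T : Λp → Type u} [∀ l, Fintype (T l)]
variable {Λt M X : Type u} [PartialOrder Λt] [PartialOrder X] [Fintype M]
variable {D : CellDatum R A Λp T}
variable {ι : Λp → Λt} {κ : M → Λt} {e : M → A} {α : Λt → X}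

local notation "Ix" => ((l : Λp) × (T l × T l))

/-- The chosen idempotent fixing the row/column of `t`. -/
noncomputable def chIdem (hA : D.IdemData ι κ e) (l : Λp) (t : T l) : M :=
  (hA.exists_idem l t).choose

lemma ch_r (hA : D.IdemData ι κ e) (l : Λp) (t s : T l) :
    D.c l s t * e (chIdem hA l t) = D.c l s t :=
  (hA.exists_idem l t).choose_spec.1 s

lemma ch_l (hA : D.IdemData ι κ e) (l : Λp) (t u : T l) :
    e (chIdem hA l t) * D.c l t u = D.c l t u :=
  (hA.exists_idem l t).choose_spec.2 u

lemma ch_mem (hA : D.IdemData ι κ e) (l : Λp) (t : T l) :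
    t ∈ D.Tset e l (chIdem hA l t) :=
  ⟨(hA.exists_idem l t).choose_spec.1, (hA.exists_idem l t).choose_spec.2⟩

lemma emul_c (hA : D.IdemData ι κ e) {ν : M} {l : Λp} {t : T l} (u : T l)
    (h : ν ≠ chIdem hA l t) : e ν * D.c l t u = 0 := by
  rw [← ch_l hA l t u, ← mul_assoc, hA.orth ν _ h, zero_mul]

lemma cmul_e (hA : D.IdemData ι κ e) {ν : M} {l : Λp} {t : T l} (s : T l)
    (h : ν ≠ chIdem hA l t) : D.c l s t * e ν = 0 := by
  rw [← ch_r hA l t s, mul_assoc, hA.orth _ ν (Ne.symm h), mul_zero]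

lemma repr_c (l : Λp) (s t : T l) :
    D.basis.repr (D.c l s t) = Finsupp.single ⟨l, (s, t)⟩ 1 := by
  rw [← D.basis_eq]; exact D.basis.repr_self _

/-- Span of the basis elements whose index satisfies `P`. -/
def spP (D : CellDatum R A Λp T) (P : Ix → Prop) : Submodule R A :=
  Submodule.span R {x : A | ∃ i, P i ∧ x = D.basis i}

lemma mem_spP {P : Ix → Prop} {z : A} :
    z ∈ spP D P ↔ ∀ i, ¬ P i → D.basis.repr z i = 0 := by
  constructor
  · intro hz i hi
    have hle : spP D P ≤
        LinearMap.ker ((Finsupp.lapply i).comp (D.basis.repr : A →ₗ[R] (Ix →₀ R))) := by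
      rw [spP, Submodule.span_le]
      rintro x ⟨j, hj, rfl⟩
      simp only [SetLike.mem_coe, LinearMap.mem_ker, LinearMap.comp_apply,
        LinearEquiv.coe_coe, Finsupp.lapply_apply, Module.Basis.repr_self]
      exact Finsupp.single_eq_of_ne (fun h => hi (h ▸ hj))
    simpa using hle hz
  · intro h
    rw [← D.basis.sum_repr z]
    refine Submodule.sum_mem _ fun i _ => ?_
    by_cases hP : P i
    · exact Submodule.smul_mem _ _ (Submodule.subset_span ⟨i, hP, rfl⟩)
    · rw [h i hP, zero_smul]; exact Submodule.zero_mem _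

lemma spP_mono {P Q : Ix → Prop} (h : ∀ i, P i → Q i) : spP D P ≤ spP D Q :=
  Submodule.span_mono (by rintro x ⟨i, hi, rfl⟩; exact ⟨i, h i hi, rfl⟩)

lemma Aup_eq (l : Λp) : D.Aup l = spP D (fun i => l < i.1) := by
  unfold CellDatum.Aup spP
  congr 1; ext x; constructor
  · rintro ⟨l', s', t', h, rfl⟩
    exact ⟨⟨l', (s', t')⟩, h, by rw [D.basis_eq]⟩
  · rintro ⟨⟨l', s', t'⟩, h, rfl⟩
    exact ⟨l', s', t', h, by rw [D.basis_eq]⟩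

lemma parab_eq : D.parab e ι κ α = spP D (fun i =>
    ∃ ε, i.2.1 ∈ D.Iset e ι κ α i.1 ε ∧ i.2.2 ∈ D.Jset e ι κ α i.1 ε) := by
  unfold CellDatum.parab spP
  congr 1; ext x; constructor
  · rintro ⟨l, ε, s, t, hs, ht, rfl⟩
    exact ⟨⟨l, (s, t)⟩, ⟨ε, hs, ht⟩, by rw [D.basis_eq]⟩
  · rintro ⟨⟨l, s, t⟩, ⟨ε, hs, ht⟩, rfl⟩
    exact ⟨l, ε, s, t, hs, ht, by rw [D.basis_eq]⟩

lemma upperOmParab_eq (p : Λp × Bool) : D.upperOmParab e ι κ α p = spP D (fun i =>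
    ∃ ε', ((p.2 < ε') ∨ (p.2 = ε' ∧ p.1 < i.1)) ∧
      i.2.1 ∈ D.Iset e ι κ α i.1 ε' ∧ i.2.2 ∈ D.Jset e ι κ α i.1 ε') := by
  unfold CellDatum.upperOmParab spP
  congr 1; ext x; constructor
  · rintro ⟨⟨m, ε'⟩, s, t, hc, hs, ht, rfl⟩
    exact ⟨⟨m, (s, t)⟩, ⟨ε', hc, hs, ht⟩, by rw [D.basis_eq]⟩
  · rintro ⟨⟨m, s, t⟩, ⟨ε', hc, hs, ht⟩, rfl⟩
    exact ⟨⟨m, ε'⟩, s, t, hc, hs, ht, by rw [D.basis_eq]⟩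

lemma mem_spP_of {P : Ix → Prop} (i : Ix) (hP : P i) : D.basis i ∈ spP D P := by
  unfold spP
  exact Submodule.subset_span ⟨i, hP, rfl⟩

lemma c_mem_spP_of {P : Ix → Prop} (l : Λp) (s t : T l) (hP : P ⟨l, (s, t)⟩) :
    D.c l s t ∈ spP D P := by
  rw [← D.basis_eq]; exact mem_spP_of _ hP

lemma cstar_star (D : CellDatum R A Λp T) (a : A) : D.star (D.star a) = a := by
  have h : D.star ∘ₗ D.star = LinearMap.id := by
    apply D.basis.ext
    rintro ⟨l, s, t⟩
    rw [D.basis_eq]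
    simp [D.star_c]
  exact DFunLike.congr_fun h a

lemma star_Aup {l : Λp} {x : A} (h : x ∈ D.Aup l) : D.star x ∈ D.Aup l := by
  have hle : D.Aup l ≤ (D.Aup l).comap D.star := by
    rw [CellDatum.Aup, Submodule.span_le]
    rintro x ⟨l', s', t', h', rfl⟩
    simp only [SetLike.mem_coe, Submodule.mem_comap]
    rw [D.star_c]
    exact Submodule.subset_span ⟨l', t', s', h', rfl⟩
  exact hle h

/-- Left-multiplication analogue of `mul_rule`. -/
lemma mul_rule' (l : Λp) (s t : T l) (a : A) :
    a * D.c l s t - ∑ u, D.coeff l s (D.star a) u • D.c l u t ∈ D.Aup l := by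
  have h := star_Aup (D.mul_rule l t s (D.star a))
  simpa only [map_sub, map_sum, D.star_mul, cstar_star, D.star_c, map_smul] using h

lemma mulR_mem (l : Λp) (s t : T l) (z : A) :
    D.c l s t * z ∈ spP D (fun j => (∃ v, j = ⟨l, (s, v)⟩) ∨ l < j.1) := by
  have h : D.c l s t * z - ∑ v, D.coeff l t z v • D.c l s v ∈ D.Aup l := D.mul_rule l s t z
  have heq : D.c l s t * z =
      (∑ v, D.coeff l t z v • D.c l s v) + (D.c l s t * z - ∑ v, D.coeff l t z v • D.c l s v) := by
    abel
  rw [Aup_eq] at h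
  rw [heq]
  refine Submodule.add_mem _ ?_ (spP_mono (P := fun i => l < i.1) (fun i hi => Or.inr hi) h)
  exact Submodule.sum_mem _ fun v _ => Submodule.smul_mem _ _
    (c_mem_spP_of l s v (Or.inl ⟨v, rfl⟩))

lemma mulL_mem (z : A) (l : Λp) (s t : T l) :
    z * D.c l s t ∈ spP D (fun j => (∃ u, j = ⟨l, (u, t)⟩) ∨ l < j.1) := by
  have h := mul_rule' (D := D) l s t z
  have heq : z * D.c l s t =
      (∑ u, D.coeff l s (D.star z) u • D.c l u t) +
        (z * D.c l s t - ∑ u, D.coeff l s (D.star z) u • D.c l u t) := by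
    abel
  rw [Aup_eq] at h
  rw [heq]
  refine Submodule.add_mem _ ?_ (spP_mono (P := fun i => l < i.1) (fun i hi => Or.inr hi) h)
  exact Submodule.sum_mem _ fun u _ => Submodule.smul_mem _ _
    (c_mem_spP_of l u t (Or.inl ⟨u, rfl⟩))

lemma repr_emul_row (hA : D.IdemData ι κ e) (ν : M) (z : A) (i : Ix)
    (h : chIdem hA i.1 i.2.1 ≠ ν) : D.basis.repr (e ν * z) i = 0 := by
  have h0 : (Finsupp.lapply i).comp ((D.basis.repr : A →ₗ[R] (Ix →₀ R)).comp
      (LinearMap.mulLeft R (e ν))) = 0 := by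
    apply D.basis.ext
    rintro ⟨l, s, t⟩
    simp only [LinearMap.comp_apply, LinearMap.mulLeft_apply, LinearMap.zero_apply,
      LinearEquiv.coe_coe, Finsupp.lapply_apply]
    rw [D.basis_eq]
    by_cases hν : ν = chIdem hA l s
    · subst hν
      rw [ch_l hA l s t, ← D.basis_eq, D.basis.repr_self]
      refine Finsupp.single_eq_of_ne ?_
      rintro rfl
      exact h rfl
    · rw [emul_c hA t (Ne.symm (fun hh => hν hh.symm)), map_zero]
      rfl
  have := DFunLike.congr_fun h0 z
  simpa using this

lemma repr_mule_col (hA : D.IdemData ι κ e) (ν : M) (z : A) (i : Ix)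
    (h : chIdem hA i.1 i.2.2 ≠ ν) : D.basis.repr (z * e ν) i = 0 := by
  have h0 : (Finsupp.lapply i).comp ((D.basis.repr : A →ₗ[R] (Ix →₀ R)).comp
      (LinearMap.mulRight R (e ν))) = 0 := by
    apply D.basis.ext
    rintro ⟨l, s, t⟩
    simp only [LinearMap.comp_apply, LinearMap.mulRight_apply, LinearMap.zero_apply,
      LinearEquiv.coe_coe, Finsupp.lapply_apply]
    rw [D.basis_eq]
    by_cases hν : ν = chIdem hA l t
    · subst hν
      rw [ch_r hA l t s, ← D.basis_eq, D.basis.repr_self]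
      refine Finsupp.single_eq_of_ne ?_
      rintro rfl
      exact h rfl
    · rw [cmul_e hA s (Ne.symm (fun hh => hν hh.symm)), map_zero]
      rfl
  have := DFunLike.congr_fun h0 z
  simpa using this

lemma iota_le (hA : D.IdemData ι κ e) {l l' : Λp} (h : l ≤ l') : ι l ≤ ι l' :=
  (hA.order_iff l l').2 h

lemma repr_emul_le (hA : D.IdemData ι κ e) (ν : M) (z : A) (i : Ix)
    (h : ¬ κ ν ≤ ι i.1) : D.basis.repr (e ν * z) i = 0 := by
  set f := (Finsupp.lapply i).comp ((D.basis.repr : A →ₗ[R] (Ix →₀ R)).comp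
    (LinearMap.mulRight R z)) with hf
  have hle : Submodule.span R {x : A | ∃ l s t, κ ν ≤ ι l ∧ x = D.c l s t} ≤
      LinearMap.ker f := by
    rw [Submodule.span_le]
    rintro x ⟨l', s', t', hle', rfl⟩
    simp only [SetLike.mem_coe, LinearMap.mem_ker, hf, LinearMap.comp_apply,
      LinearMap.mulRight_apply, LinearEquiv.coe_coe, Finsupp.lapply_apply]
    refine mem_spP.mp (mulR_mem l' s' t' z) i ?_
    rintro (⟨v, rfl⟩ | hlt)
    · exact h hle'
    · exact h (le_trans hle' (iota_le hA (le_of_lt hlt)))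
  have := hle (hA.mem_span ν)
  rw [LinearMap.mem_ker, hf] at this
  simpa using this

lemma repr_mule_le (hA : D.IdemData ι κ e) (ν : M) (z : A) (i : Ix)
    (h : ¬ κ ν ≤ ι i.1) : D.basis.repr (z * e ν) i = 0 := by
  set f := (Finsupp.lapply i).comp ((D.basis.repr : A →ₗ[R] (Ix →₀ R)).comp
    (LinearMap.mulLeft R z)) with hf
  have hle : Submodule.span R {x : A | ∃ l s t, κ ν ≤ ι l ∧ x = D.c l s t} ≤
      LinearMap.ker f := by
    rw [Submodule.span_le]
    rintro x ⟨l', s', t', hle', rfl⟩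
    simp only [SetLike.mem_coe, LinearMap.mem_ker, hf, LinearMap.comp_apply,
      LinearMap.mulLeft_apply, LinearEquiv.coe_coe, Finsupp.lapply_apply]
    refine mem_spP.mp (mulL_mem z l' s' t') i ?_
    rintro (⟨u, rfl⟩ | hlt)
    · exact h hle'
    · exact h (le_trans hle' (iota_le hA (le_of_lt hlt)))
  have := hle (hA.mem_span ν)
  rw [LinearMap.mem_ker, hf] at this
  simpa using this

open Classical in
lemma repr_sum_col {l : Λp} (f : T l → R) (t u₀ t₀ : T l) :
    D.basis.repr (∑ u, f u • D.c l u t) ⟨l, (u₀, t₀)⟩ = if t₀ = t then f u₀ else 0 := by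
  rw [map_sum, Finsupp.finset_sum_apply]
  have hterm : ∀ u : T l, (D.basis.repr (f u • D.c l u t)) ⟨l, (u₀, t₀)⟩ =
      if u = u₀ ∧ t = t₀ then f u else 0 := by
    intro u
    rw [map_smul, repr_c, Finsupp.smul_apply, Finsupp.single_apply]
    simp only [Sigma.mk.inj_iff, heq_eq_eq, Prod.mk.injEq, true_and, smul_eq_mul,
      mul_ite, mul_one, mul_zero]
  rw [Finset.sum_congr rfl (fun u _ => hterm u)]
  by_cases ht : t₀ = t
  · subst ht
    rw [if_pos rfl]
    simp only [and_true]
    exact Finset.sum_ite_eq' Finset.univ u₀ f ▸ by simp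
  · rw [if_neg ht, Finset.sum_eq_zero]
    intro u _
    exact if_neg (fun hc => ht hc.2.symm)

open Classical in
lemma repr_sum_row {l : Λp} (f : T l → R) (s s₀ v₀ : T l) :
    D.basis.repr (∑ v, f v • D.c l s v) ⟨l, (s₀, v₀)⟩ = if s₀ = s then f v₀ else 0 := by
  rw [map_sum, Finsupp.finset_sum_apply]
  have hterm : ∀ v : T l, (D.basis.repr (f v • D.c l s v)) ⟨l, (s₀, v₀)⟩ =
      if s = s₀ ∧ v = v₀ then f v else 0 := by
    intro v
    rw [map_smul, repr_c, Finsupp.smul_apply, Finsupp.single_apply]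
    simp only [Sigma.mk.inj_iff, heq_eq_eq, Prod.mk.injEq, true_and, smul_eq_mul,
      mul_ite, mul_one, mul_zero]
  rw [Finset.sum_congr rfl (fun v _ => hterm v)]
  by_cases hs : s₀ = s
  · subst hs
    rw [if_pos rfl]
    simp only [true_and]
    exact Finset.sum_ite_eq' Finset.univ v₀ f ▸ by simp
  · rw [if_neg hs, Finset.sum_eq_zero]
    intro v _
    exact if_neg (fun hc => hs hc.1.symm)

lemma repr_sum_lvl_ne {l : Λp} (g : T l → A) (f : T l → R) (i : Ix) (h : i.1 ≠ l)
    (hg : ∀ u, ∃ p q, g u = D.c l p q) :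
    D.basis.repr (∑ u, f u • g u) i = 0 := by
  rw [map_sum, Finsupp.finset_sum_apply]
  refine Finset.sum_eq_zero fun u _ => ?_
  obtain ⟨p, q, hpq⟩ := hg u
  rw [hpq, map_smul, repr_c, Finsupp.smul_apply, Finsupp.single_eq_of_ne, smul_zero]
  intro hc
  exact h (congrArg Sigma.fst hc)

lemma repr_mulL_coeff (l : Λp) (s t : T l) (a : A) (u : T l) :
    D.basis.repr (a * D.c l s t) ⟨l, (u, t)⟩ = D.coeff l s (D.star a) u := by
  have h : a * D.c l s t - ∑ u, D.coeff l s (D.star a) u • D.c l u t ∈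
      spP D (fun i => l < i.1) := by
    rw [← Aup_eq]; exact mul_rule' (D := D) l s t a
  have h0 := mem_spP.mp h ⟨l, (u, t)⟩ (lt_irrefl l)
  rw [map_sub, Finsupp.sub_apply, sub_eq_zero] at h0
  rw [h0, repr_sum_col, if_pos rfl]

lemma repr_mulR_coeff (l : Λp) (s t : T l) (a : A) (v : T l) :
    D.basis.repr (D.c l s t * a) ⟨l, (s, v)⟩ = D.coeff l t a v := by
  have h : D.c l s t * a - ∑ v, D.coeff l t a v • D.c l s v ∈
      spP D (fun i => l < i.1) := by
    rw [← Aup_eq]; exact D.mul_rule l s t a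
  have h0 := mem_spP.mp h ⟨l, (s, v)⟩ (lt_irrefl l)
  rw [map_sub, Finsupp.sub_apply, sub_eq_zero] at h0
  rw [h0, repr_sum_row, if_pos rfl]

/-- The row/column of `t` is of strictly lower `α`-type. -/
def loT (hA : D.IdemData ι κ e) (α : Λt → X) (l : Λp) (t : T l) : Prop :=
  α (κ (chIdem hA l t)) < α (ι l)

/-- The row/column of `t` is of maximal `α`-type. -/
def hiT (hA : D.IdemData ι κ e) (α : Λt → X) (l : Λp) (t : T l) : Prop :=
  α (ι l) = α (κ (chIdem hA l t))

lemma loT_mem (hA : D.IdemData ι κ e) {l : Λp} {t : T l} (h : loT hA α l t) :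
    t ∈ D.Tminus e ι κ α l :=
  ⟨_, ch_mem hA l t, h⟩

lemma hiT_mem (hA : D.IdemData ι κ e) {l : Λp} {t : T l} (h : hiT hA α l t) :
    t ∈ D.Tplus e ι κ α l :=
  ⟨_, ch_mem hA l t, h⟩

lemma row_filter (hA : D.IdemData ι κ e) {l : Λp} {s t : T l} (z : A) (i : Ix)
    (h : chIdem hA i.1 i.2.1 ≠ chIdem hA l s) :
    D.basis.repr (D.c l s t * z) i = 0 := by
  have heq : D.c l s t * z = e (chIdem hA l s) * (D.c l s t * z) := by
    rw [← mul_assoc, ch_l hA l s t]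
  rw [heq]
  exact repr_emul_row hA _ _ i h

lemma col_filter (hA : D.IdemData ι κ e) {l : Λp} {s t : T l} (z : A) (i : Ix)
    (h : chIdem hA i.1 i.2.2 ≠ chIdem hA l t) :
    D.basis.repr (z * D.c l s t) i = 0 := by
  have heq : z * D.c l s t = (z * D.c l s t) * e (chIdem hA l t) := by
    rw [mul_assoc, ch_r hA l t s]
  rw [heq]
  exact repr_mule_col hA _ _ i h

lemma mulR_support {l : Λp} {s t : T l} {z : A} {i : Ix}
    (h : D.basis.repr (D.c l s t * z) i ≠ 0) : (∃ v, i = ⟨l, (s, v)⟩) ∨ l < i.1 := by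
  by_contra hc
  exact h (mem_spP.mp (mulR_mem l s t z) i hc)

lemma mulL_support {z : A} {l : Λp} {s t : T l} {i : Ix}
    (h : D.basis.repr (z * D.c l s t) i ≠ 0) : (∃ u, i = ⟨l, (u, t)⟩) ∨ l < i.1 := by
  by_contra hc
  exact h (mem_spP.mp (mulL_mem z l s t) i hc)

lemma alvl_of_mulR (hA : D.IdemData ι κ e) (hα : Monotone α) {l : Λp} {s t : T l} {z : A}
    {i : Ix} (h : D.basis.repr (D.c l s t * z) i ≠ 0) : α (ι l) ≤ α (ι i.1) := by
  rcases mulR_support h with ⟨v, rfl⟩ | hlt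
  · exact le_refl _
  · exact hα (iota_le hA (le_of_lt hlt))

lemma alvl_of_mulL (hA : D.IdemData ι κ e) (hα : Monotone α) {z : A} {l : Λp} {s t : T l}
    {i : Ix} (h : D.basis.repr (z * D.c l s t) i ≠ 0) : α (ι l) ≤ α (ι i.1) := by
  rcases mulL_support h with ⟨u, rfl⟩ | hlt
  · exact le_refl _
  · exact hα (iota_le hA (le_of_lt hlt))

section NontrivialR

variable [Nontrivial R]

lemma c_ne_zero (l : Λp) (s t : T l) : D.c l s t ≠ 0 := by
  rw [← D.basis_eq]; exact D.basis.ne_zero _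

lemma witness_unique (hA : D.IdemData ι κ e) {l : Λp} {ν : M} {t : T l}
    (h : t ∈ D.Tset e l ν) : ν = chIdem hA l t := by
  by_contra hne
  have h0 := emul_c hA (ν := ν) (l := l) (t := t) t hne
  rw [h.2 t] at h0
  exact c_ne_zero l t t h0

lemma mem_lo (hA : D.IdemData ι κ e) {l : Λp} {t : T l}
    (h : t ∈ D.Tminus e ι κ α l) : loT hA α l t := by
  obtain ⟨ν, hT, hlt⟩ := h
  rwa [witness_unique hA hT] at hlt

lemma mem_hi (hA : D.IdemData ι κ e) {l : Λp} {t : T l}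
    (h : t ∈ D.Tplus e ι κ α l) : hiT hA α l t := by
  obtain ⟨ν, hT, hlt⟩ := h
  rwa [witness_unique hA hT] at hlt

lemma level_le (hA : D.IdemData ι κ e) (hα : Monotone α) (l : Λp) (t : T l) :
    α (κ (chIdem hA l t)) ≤ α (ι l) := by
  refine hα ?_
  by_contra hk
  have h0 := repr_emul_le hA (chIdem hA l t) (D.c l t t) ⟨l, (t, t)⟩ hk
  rw [ch_l hA l t t, repr_c, Finsupp.single_eq_same] at h0
  exact one_ne_zero h0

lemma lo_or_hi (hA : D.IdemData ι κ e) (hα : Monotone α) (l : Λp) (t : T l) :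
    loT hA α l t ∨ hiT hA α l t := by
  rcases lt_or_eq_of_le (level_le hA hα l t) with h | h
  · exact Or.inl h
  · exact Or.inr h.symm

end NontrivialR

section SuppLemmas

variable [Nontrivial R]

lemma suppR_true (hA : D.IdemData ι κ e) (hα : Monotone α) {l : Λp} {s : T l}
    (hs : loT hA α l s) (t : T l) (a : A) (i : Ix)
    (hrow : ¬ loT hA α i.1 i.2.1) : D.basis.repr (D.c l s t * a) i = 0 := by
  by_contra hz
  have h1 : chIdem hA i.1 i.2.1 = chIdem hA l s := by
    by_contra hr
    exact hz (row_filter hA a i hr)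
  apply hrow
  show α (κ (chIdem hA i.1 i.2.1)) < α (ι i.1)
  rw [h1]
  exact lt_of_lt_of_le hs (alvl_of_mulR hA hα hz)

lemma suppL_true (hA : D.IdemData ι κ e) (hα : Monotone α) {l : Λp} {s : T l}
    (hs : loT hA α l s) (t : T l) {a : A} (ha : a ∈ D.parab e ι κ α) (i : Ix)
    (hrow : ¬ loT hA α i.1 i.2.1) : D.basis.repr (a * D.c l s t) i = 0 := by
  refine Submodule.span_induction
    (p := fun x _ => D.basis.repr (x * D.c l s t) i = 0) ?_ ?_ ?_ ?_ ha
  · rintro x ⟨m, ε'', xx, y, hx, hy, rfl⟩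
    cases ε''
    · -- positive part generator
      have hxx : hiT hA α m xx := mem_hi hA hx
      have hyy : hiT hA α m y := mem_hi hA hy
      by_cases hcy : chIdem hA l s = chIdem hA m y
      · by_contra hz
        have h1 : chIdem hA i.1 i.2.1 = chIdem hA m xx := by
          by_contra hr
          exact hz (row_filter hA _ i hr)
        have h2 : α (ι l) ≤ α (ι i.1) := alvl_of_mulL hA hα hz
        apply hrow
        show α (κ (chIdem hA i.1 i.2.1)) < α (ι i.1)
        rw [h1]
        calc α (κ (chIdem hA m xx)) = α (ι m) := hxx.symm
          _ = α (κ (chIdem hA m y)) := hyy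
          _ = α (κ (chIdem hA l s)) := by rw [hcy]
          _ < α (ι l) := hs
          _ ≤ α (ι i.1) := h2
      · have h0 : D.c m xx y * D.c l s t = 0 := by
          rw [← ch_l hA l s t, ← mul_assoc, cmul_e hA xx hcy, zero_mul]
        rw [h0]
        simp
    · -- negative part generator
      have hxx : loT hA α m xx := mem_lo hA hx
      by_contra hz
      have h1 : chIdem hA i.1 i.2.1 = chIdem hA m xx := by
        by_contra hr
        exact hz (row_filter hA _ i hr)
      apply hrow
      show α (κ (chIdem hA i.1 i.2.1)) < α (ι i.1)
      rw [h1]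
      exact lt_of_lt_of_le hxx (alvl_of_mulR hA hα hz)
  · simp
  · intro x y _ _ hhx hhy
    rw [add_mul, map_add, Finsupp.add_apply, hhx, hhy, add_zero]
  · intro r x _ hhx
    rw [smul_mul_assoc, map_smul, Finsupp.smul_apply, hhx, smul_zero]

lemma suppL_false (hA : D.IdemData ι κ e) (hα : Monotone α) {l : Λp} {s t : T l}
    (hs : hiT hA α l s) (ht : hiT hA α l t) {a : A} (ha : a ∈ D.parab e ι κ α) (i : Ix)
    (hrow : ¬ loT hA α i.1 i.2.1)
    (hrc : ¬ (hiT hA α i.1 i.2.1 ∧ hiT hA α i.1 i.2.2)) :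
    D.basis.repr (a * D.c l s t) i = 0 := by
  refine Submodule.span_induction
    (p := fun x _ => D.basis.repr (x * D.c l s t) i = 0) ?_ ?_ ?_ ?_ ha
  · rintro x ⟨m, ε'', xx, y, hx, hy, rfl⟩
    cases ε''
    · have hxx : hiT hA α m xx := mem_hi hA hx
      have hyy : hiT hA α m y := mem_hi hA hy
      by_cases hcy : chIdem hA l s = chIdem hA m y
      · by_contra hz
        have h1 : chIdem hA i.1 i.2.1 = chIdem hA m xx := by
          by_contra hr
          exact hz (row_filter hA _ i hr)
        have hcol : chIdem hA i.1 i.2.2 = chIdem hA l t := by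
          by_contra hc
          exact hz (col_filter hA _ i hc)
        have h2 : α (ι l) ≤ α (ι i.1) := alvl_of_mulL hA hα hz
        have hrowval : α (κ (chIdem hA i.1 i.2.1)) = α (ι l) := by
          rw [h1]
          calc α (κ (chIdem hA m xx)) = α (ι m) := hxx.symm
            _ = α (κ (chIdem hA m y)) := hyy
            _ = α (κ (chIdem hA l s)) := by rw [hcy]
            _ = α (ι l) := hs.symm
        rcases lt_or_eq_of_le h2 with hlt | heq
        · apply hrow
          show α (κ (chIdem hA i.1 i.2.1)) < α (ι i.1)
          rw [hrowval]
          exact hlt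
        · refine hrc ⟨?_, ?_⟩
          · show α (ι i.1) = α (κ (chIdem hA i.1 i.2.1))
            rw [hrowval, ← heq]
          · show α (ι i.1) = α (κ (chIdem hA i.1 i.2.2))
            rw [hcol, ← heq]
            exact ht
      · have h0 : D.c m xx y * D.c l s t = 0 := by
          rw [← ch_l hA l s t, ← mul_assoc, cmul_e hA xx hcy, zero_mul]
        rw [h0]
        simp
    · have hxx : loT hA α m xx := mem_lo hA hx
      by_contra hz
      have h1 : chIdem hA i.1 i.2.1 = chIdem hA m xx := by
        by_contra hr
        exact hz (row_filter hA _ i hr)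
      apply hrow
      show α (κ (chIdem hA i.1 i.2.1)) < α (ι i.1)
      rw [h1]
      exact lt_of_lt_of_le hxx (alvl_of_mulR hA hα hz)
  · simp
  · intro x y _ _ hhx hhy
    rw [add_mul, map_add, Finsupp.add_apply, hhx, hhy, add_zero]
  · intro r x _ hhx
    rw [smul_mul_assoc, map_smul, Finsupp.smul_apply, hhx, smul_zero]

lemma suppR_false (hA : D.IdemData ι κ e) (hα : Monotone α) {l : Λp} {s t : T l}
    (hs : hiT hA α l s) (ht : hiT hA α l t) {a : A} (ha : a ∈ D.parab e ι κ α) (i : Ix)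
    (hrow : ¬ loT hA α i.1 i.2.1)
    (hrc : ¬ (hiT hA α i.1 i.2.1 ∧ hiT hA α i.1 i.2.2)) :
    D.basis.repr (D.c l s t * a) i = 0 := by
  refine Submodule.span_induction
    (p := fun x _ => D.basis.repr (D.c l s t * x) i = 0) ?_ ?_ ?_ ?_ ha
  · rintro x ⟨m, ε'', xx, y, hx, hy, rfl⟩
    by_cases hcx : chIdem hA m xx = chIdem hA l t
    · cases ε''
      · have hxx : hiT hA α m xx := mem_hi hA hx
        have hyy : hiT hA α m y := mem_hi hA hy
        by_contra hz
        have h1 : chIdem hA i.1 i.2.1 = chIdem hA l s := by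
          by_contra hr
          exact hz (row_filter hA _ i hr)
        have hcol : chIdem hA i.1 i.2.2 = chIdem hA m y := by
          by_contra hc
          exact hz (col_filter hA _ i hc)
        have h2 : α (ι l) ≤ α (ι i.1) := alvl_of_mulR hA hα hz
        have hm : α (ι m) = α (ι l) := by
          calc α (ι m) = α (κ (chIdem hA m xx)) := hxx
            _ = α (κ (chIdem hA l t)) := by rw [hcx]
            _ = α (ι l) := ht.symm
        rcases lt_or_eq_of_le h2 with hlt | heq
        · apply hrow
          show α (κ (chIdem hA i.1 i.2.1)) < α (ι i.1)
          rw [h1, ← hs]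
          exact hlt
        · refine hrc ⟨?_, ?_⟩
          · show α (ι i.1) = α (κ (chIdem hA i.1 i.2.1))
            rw [h1, ← hs, heq]
          · show α (ι i.1) = α (κ (chIdem hA i.1 i.2.2))
            rw [hcol, ← hyy, hm, heq]
      · have hxx : loT hA α m xx := mem_lo hA hx
        have hlm : α (ι l) < α (ι m) := by
          calc α (ι l) = α (κ (chIdem hA l t)) := ht
            _ = α (κ (chIdem hA m xx)) := by rw [hcx]
            _ < α (ι m) := hxx
        by_contra hz
        have h1 : chIdem hA i.1 i.2.1 = chIdem hA l s := by
          by_contra hr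
          exact hz (row_filter hA _ i hr)
        have h2 : α (ι m) ≤ α (ι i.1) := alvl_of_mulL hA hα hz
        apply hrow
        show α (κ (chIdem hA i.1 i.2.1)) < α (ι i.1)
        rw [h1, ← hs]
        exact lt_of_lt_of_le hlm h2
    · have h0 : D.c l s t * D.c m xx y = 0 := by
        rw [← ch_l hA m xx y, ← mul_assoc, cmul_e hA s hcx, zero_mul]
      rw [h0]
      simp
  · simp
  · intro x y _ _ hhx hhy
    rw [mul_add, map_add, Finsupp.add_apply, hhx, hhy, add_zero]
  · intro r x _ hhx
    rw [mul_smul_comm, map_smul, Finsupp.smul_apply, hhx, smul_zero]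

end SuppLemmas

lemma upperOm_le_parab (p : Λp × Bool) :
    D.upperOmParab e ι κ α p ≤ D.parab e ι κ α := by
  rw [CellDatum.upperOmParab, CellDatum.parab, Submodule.span_le]
  rintro x ⟨⟨m, ε'⟩, s, t, _, hI, hJ, rfl⟩
  exact Submodule.subset_span ⟨m, ε', s, t, hI, hJ, rfl⟩

lemma hi_not_lo (hA : D.IdemData ι κ e) {l : Λp} {t : T l} (h : hiT hA α l t) :
    ¬ loT hA α l t := by
  intro hl
  have hl' : α (κ (chIdem hA l t)) < α (ι l) := hl
  have h' : α (ι l) = α (κ (chIdem hA l t)) := h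
  rw [h'] at hl'
  exact lt_irrefl _ hl'

open Classical in
lemma left_rule (hA : D.IdemData ι κ e) (hα : Monotone α) :
    ∀ (l : Λp) (ε : Bool) (s : T l), s ∈ D.Iset e ι κ α l ε →
      ∀ a ∈ D.parab e ι κ α, ∃ r : T l → R,
        (∀ u, r u ≠ 0 → u ∈ D.Iset e ι κ α l ε) ∧
        ∀ t ∈ D.Jset e ι κ α l ε,
          a * D.c l s t - ∑ u, r u • D.c l u t ∈ D.upperOmParab e ι κ α (l, ε) := by
  rcases subsingleton_or_nontrivial R with hR | hR
  · haveI := hR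
    haveI : Subsingleton A := Module.subsingleton R A
    intro l ε s _ a _
    refine ⟨0, fun u hu => absurd rfl hu, fun t _ => ?_⟩
    have hz : (a * D.c l s t - ∑ u, (0 : T l → R) u • D.c l u t) = 0 :=
      Subsingleton.elim _ _
    rw [hz]
    exact Submodule.zero_mem _
  · haveI := hR
    intro l ε s hs a ha
    refine ⟨fun u => if u ∈ D.Iset e ι κ α l ε then D.coeff l s (D.star a) u else 0, ?_, ?_⟩
    · intro u hu
      by_contra hmem
      exact hu (by simp [hmem])
    · intro t ht
      rw [upperOmParab_eq, mem_spP]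
      rintro ⟨m, p, q⟩ hbad
      rw [map_sub, Finsupp.sub_apply]
      by_cases hm : m = l
      · subst hm
        rw [repr_sum_col]
        by_cases hq : q = t
        · subst hq
          rw [if_pos rfl, repr_mulL_coeff]
          by_cases hp : p ∈ D.Iset e ι κ α m ε
          · rw [if_pos hp, sub_self]
          · rw [if_neg hp, sub_zero, ← repr_mulL_coeff]
            cases ε
            · have hsi : hiT hA α m s := mem_hi hA hs
              have hti : hiT hA α m q := mem_hi hA ht
              by_cases hlo : loT hA α m p
              · exact absurd ⟨true, Or.inl Bool.false_lt_true, loT_mem hA hlo, Set.mem_univ _⟩ hbad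
              · refine suppL_false hA hα hsi hti ha ⟨m, (p, q)⟩ hlo ?_
                rintro ⟨h1, _⟩
                exact hp (hiT_mem hA h1)
            · have hslo : loT hA α m s := mem_lo hA hs
              refine suppL_true hA hα hslo q ha ⟨m, (p, q)⟩ ?_
              exact fun hlo => hp (loT_mem hA hlo)
        · rw [if_neg hq, sub_zero]
          by_contra hz
          rcases mulL_support hz with ⟨u, he⟩ | hlt
          · have h2 : (p, q) = (u, t) := eq_of_heq (Sigma.mk.inj_iff.mp he).2
            exact hq (congrArg Prod.snd h2)
          · exact lt_irrefl m hlt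
      · rw [repr_sum_lvl_ne _ _ ⟨m, (p, q)⟩ hm (fun u => ⟨u, t, rfl⟩), sub_zero]
        by_contra hz
        have hlm : l < m := by
          rcases mulL_support hz with ⟨u, he⟩ | hlt
          · exact absurd (congrArg Sigma.fst he) hm
          · exact hlt
        cases ε
        · have hsi : hiT hA α l s := mem_hi hA hs
          have hti : hiT hA α l t := mem_hi hA ht
          by_cases hlo : loT hA α m p
          · exact hbad ⟨true, Or.inl Bool.false_lt_true, loT_mem hA hlo, Set.mem_univ _⟩
          · by_cases hhc : hiT hA α m p ∧ hiT hA α m q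
            · exact hbad ⟨false, Or.inr ⟨rfl, hlm⟩, hiT_mem hA hhc.1, hiT_mem hA hhc.2⟩
            · exact hz (suppL_false hA hα hsi hti ha ⟨m, (p, q)⟩ hlo hhc)
        · have hslo : loT hA α l s := mem_lo hA hs
          by_cases hlo : loT hA α m p
          · exact hbad ⟨true, Or.inr ⟨rfl, hlm⟩, loT_mem hA hlo, Set.mem_univ _⟩
          · exact hz (suppL_true hA hα hslo t ha ⟨m, (p, q)⟩ hlo)

open Classical in
lemma right_rule (hA : D.IdemData ι κ e) (hα : Monotone α) :
    ∀ (l : Λp) (ε : Bool) (t : T l), t ∈ D.Jset e ι κ α l ε →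
      ∀ a ∈ D.parab e ι κ α, ∃ r : T l → R,
        (∀ v, r v ≠ 0 → v ∈ D.Jset e ι κ α l ε) ∧
        ∀ s ∈ D.Iset e ι κ α l ε,
          D.c l s t * a - ∑ v, r v • D.c l s v ∈ D.upperOmParab e ι κ α (l, ε) := by
  rcases subsingleton_or_nontrivial R with hR | hR
  · haveI := hR
    haveI : Subsingleton A := Module.subsingleton R A
    intro l ε t _ a _
    refine ⟨0, fun v hv => absurd rfl hv, fun s _ => ?_⟩
    have hz : (D.c l s t * a - ∑ v, (0 : T l → R) v • D.c l s v) = 0 :=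
      Subsingleton.elim _ _
    rw [hz]
    exact Submodule.zero_mem _
  · haveI := hR
    intro l ε t ht a ha
    refine ⟨fun v => if v ∈ D.Jset e ι κ α l ε then D.coeff l t a v else 0, ?_, ?_⟩
    · intro v hv
      by_contra hmem
      exact hv (by simp [hmem])
    · intro s hsI
      rw [upperOmParab_eq, mem_spP]
      rintro ⟨m, p, q⟩ hbad
      rw [map_sub, Finsupp.sub_apply]
      by_cases hm : m = l
      · subst hm
        rw [repr_sum_row]
        by_cases hp : p = s
        · subst hp
          rw [if_pos rfl, repr_mulR_coeff]
          by_cases hqJ : q ∈ D.Jset e ι κ α m ε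
          · rw [if_pos hqJ, sub_self]
          · rw [if_neg hqJ, sub_zero, ← repr_mulR_coeff]
            cases ε
            · have hsi : hiT hA α m p := mem_hi hA hsI
              have hti : hiT hA α m t := mem_hi hA ht
              refine suppR_false hA hα hsi hti ha ⟨m, (p, q)⟩ (hi_not_lo hA hsi) ?_
              rintro ⟨_, h2⟩
              exact hqJ (hiT_mem hA h2)
            · exact absurd (Set.mem_univ q) hqJ
        · rw [if_neg hp, sub_zero]
          by_contra hz
          rcases mulR_support hz with ⟨v, he⟩ | hlt
          · have h2 : (p, q) = (s, v) := eq_of_heq (Sigma.mk.inj_iff.mp he).2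
            exact hp (congrArg Prod.fst h2)
          · exact lt_irrefl m hlt
      · rw [repr_sum_lvl_ne _ _ ⟨m, (p, q)⟩ hm (fun v => ⟨s, v, rfl⟩), sub_zero]
        by_contra hz
        have hlm : l < m := by
          rcases mulR_support hz with ⟨v, he⟩ | hlt
          · exact absurd (congrArg Sigma.fst he) hm
          · exact hlt
        cases ε
        · have hsi : hiT hA α l s := mem_hi hA hsI
          have hti : hiT hA α l t := mem_hi hA ht
          by_cases hlo : loT hA α m p
          · exact hbad ⟨true, Or.inl Bool.false_lt_true, loT_mem hA hlo, Set.mem_univ _⟩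
          · by_cases hhc : hiT hA α m p ∧ hiT hA α m q
            · exact hbad ⟨false, Or.inr ⟨rfl, hlm⟩, hiT_mem hA hhc.1, hiT_mem hA hhc.2⟩
            · exact hz (suppR_false hA hα hsi hti ha ⟨m, (p, q)⟩ hlo hhc)
        · have hslo : loT hA α l s := mem_lo hA hsI
          by_cases hlo : loT hA α m p
          · exact hbad ⟨true, Or.inr ⟨rfl, hlm⟩, loT_mem hA hlo, Set.mem_univ _⟩
          · exact hz (suppR_true hA hα hslo t a ⟨m, (p, q)⟩ hlo)

end Aux


/-- the parabolic type subalgebra `Ã^α`, spanned by the `c^λ_{st}` with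
`(s,t) ∈ Ĩ(λ,ε) × J̃(λ,ε)`, is a subalgebra of `A` containing `A^α`, and it is a
standardly based algebra with standard basis `Z̃^α` with respect to the poset `Ω`:
left (resp. right) multiplication acts on the first (resp. second) index modulo higher
terms, with structure constants independent of the other index. -/
theorem stmt_13
    {R A : Type u} [CommRing R] [Ring A] [Algebra R A]
    {Λp : Type u} [PartialOrder Λp] [Fintype Λp]
    {T : Λp → Type u} [∀ l, Fintype (T l)]
    {Λt M X : Type u} [PartialOrder Λt] [PartialOrder X] [Fintype M]
    (D : CellDatum R A Λp T)
    (ι : Λp → Λt) (κ : M → Λt) (e : M → A)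
    (hA : D.IdemData ι κ e)
    (α : Λt → X) (hα : Monotone α) :
    D.levi e ι κ α ≤ D.parab e ι κ α ∧
    (1 : A) ∈ D.parab e ι κ α ∧
    (∀ x y : A, x ∈ D.parab e ι κ α → y ∈ D.parab e ι κ α →
      x * y ∈ D.parab e ι κ α) ∧
    (∃ bb : Module.Basis {p : (l : Λp) × (T l × T l) //
        ∃ ε, p.2.1 ∈ D.Iset e ι κ α p.1 ε ∧ p.2.2 ∈ D.Jset e ι κ α p.1 ε}
        R ↥(D.parab e ι κ α),
      ∀ p, (bb p : A) = D.c p.1.1 p.1.2.1 p.1.2.2) ∧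
    -- left multiplication rule (coefficients independent of the second index)
    (∀ (l : Λp) (ε : Bool) (s : T l), s ∈ D.Iset e ι κ α l ε →
      ∀ a ∈ D.parab e ι κ α, ∃ r : T l → R,
        (∀ u, r u ≠ 0 → u ∈ D.Iset e ι κ α l ε) ∧
        ∀ t ∈ D.Jset e ι κ α l ε,
          a * D.c l s t - ∑ u, r u • D.c l u t ∈ D.upperOmParab e ι κ α (l, ε)) ∧
    -- right multiplication rule (coefficients independent of the first index)
    (∀ (l : Λp) (ε : Bool) (t : T l), t ∈ D.Jset e ι κ α l ε →
      ∀ a ∈ D.parab e ι κ α, ∃ r : T l → R,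
        (∀ v, r v ≠ 0 → v ∈ D.Jset e ι κ α l ε) ∧
        ∀ s ∈ D.Iset e ι κ α l ε,
          D.c l s t * a - ∑ v, r v • D.c l s v ∈ D.upperOmParab e ι κ α (l, ε)) := by
  classical
  have hL := left_rule hA hα
  have hR := right_rule hA hα
  refine ⟨?_, ?_, ?_, ?_, hL, hR⟩
  · -- the Levi subalgebra is contained in the parabolic one
    rw [CellDatum.levi, Submodule.span_le]
    rintro x ⟨l, ε, s, t, hs, ht, rfl⟩
    refine Submodule.subset_span ⟨l, ε, s, t, hs, ?_, rfl⟩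
    cases ε
    · exact ht
    · exact Set.mem_univ t
  · -- the parabolic subalgebra contains the identity
    rcases subsingleton_or_nontrivial R with hRt | hRt
    · haveI := hRt
      haveI : Subsingleton A := Module.subsingleton R A
      rw [Subsingleton.elim (1 : A) 0]
      exact Submodule.zero_mem _
    · haveI := hRt
      rw [← hA.sum_one]
      refine Submodule.sum_mem _ fun μ _ => ?_
      rw [parab_eq, mem_spP]
      intro i hbad
      have hid : e μ = e μ * e μ := (hA.idem μ).symm
      by_cases hrow : chIdem hA i.1 i.2.1 = μ
      · by_cases hcol : chIdem hA i.1 i.2.2 = μ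
        · by_cases hκ : κ μ ≤ ι i.1
          · exfalso
            apply hbad
            rcases lt_or_eq_of_le (hα hκ) with hlt | heqq
            · exact ⟨true, ⟨μ, hrow ▸ ch_mem hA i.1 i.2.1, hlt⟩, Set.mem_univ _⟩
            · exact ⟨false, ⟨μ, hrow ▸ ch_mem hA i.1 i.2.1, heqq.symm⟩,
                ⟨μ, hcol ▸ ch_mem hA i.1 i.2.2, heqq.symm⟩⟩
          · rw [hid]
            exact repr_emul_le hA μ (e μ) i hκ
        · rw [hid]
          exact repr_mule_col hA μ (e μ) i hcol
      · rw [hid]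
        exact repr_emul_row hA μ (e μ) i hrow
  · -- the parabolic subalgebra is closed under multiplication
    intro x y hx hy
    have hyy : y ∈ Submodule.span R {z : A | ∃ l ε s t,
        s ∈ D.Iset e ι κ α l ε ∧ t ∈ D.Jset e ι κ α l ε ∧ z = D.c l s t} := hy
    refine Submodule.span_induction (p := fun z _ => x * z ∈ D.parab e ι κ α)
      ?_ ?_ ?_ ?_ hyy
    · rintro z ⟨l, ε, s, t, hsI, htJ, rfl⟩
      show x * D.c l s t ∈ D.parab e ι κ α
      obtain ⟨r, hr, hmem⟩ := hL l ε s hsI x hx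
      have h2 := hmem t htJ
      have heqq : x * D.c l s t =
          (x * D.c l s t - ∑ u, r u • D.c l u t) + ∑ u, r u • D.c l u t := by abel
      rw [heqq]
      refine Submodule.add_mem _ (upperOm_le_parab _ h2)
        (Submodule.sum_mem _ fun u _ => ?_)
      by_cases hu : r u = 0
      · rw [hu, zero_smul]
        exact Submodule.zero_mem _
      · exact Submodule.smul_mem _ _
          (Submodule.subset_span ⟨l, ε, u, t, hr u hu, htJ, rfl⟩)
    · show x * 0 ∈ D.parab e ι κ α
      rw [mul_zero]
      exact Submodule.zero_mem _
    · intro z w _ _ hz hw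
      show x * (z + w) ∈ D.parab e ι κ α
      rw [mul_add]
      exact Submodule.add_mem _ hz hw
    · intro rr z _ hz
      show x * (rr • z) ∈ D.parab e ι κ α
      rw [mul_smul_comm]
      exact Submodule.smul_mem _ _ hz
  · -- the standard basis of the parabolic subalgebra
    have hli : LinearIndependent R (fun p : {p : (l : Λp) × (T l × T l) //
        ∃ ε, p.2.1 ∈ D.Iset e ι κ α p.1 ε ∧ p.2.2 ∈ D.Jset e ι κ α p.1 ε} =>
          D.basis p.1) :=
      D.basis.linearIndependent.comp Subtype.val Subtype.val_injective
    have hsp : Submodule.span R (Set.range (fun p : {p : (l : Λp) × (T l × T l) //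
        ∃ ε, p.2.1 ∈ D.Iset e ι κ α p.1 ε ∧ p.2.2 ∈ D.Jset e ι κ α p.1 ε} =>
          D.basis p.1)) = D.parab e ι κ α := by
      rw [parab_eq (D := D), spP]
      congr 1
      ext x
      constructor
      · rintro ⟨⟨i, hP⟩, rfl⟩
        exact ⟨i, hP, rfl⟩
      · rintro ⟨i, hP, rfl⟩
        exact ⟨⟨i, hP⟩, rfl⟩
    refine ⟨(Module.Basis.span hli).map (LinearEquiv.ofEq _ _ hsp), ?_⟩
    rintro ⟨⟨l, s, t⟩, hP⟩
    rw [Module.Basis.map_apply]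
    have hco : (((LinearEquiv.ofEq _ _ hsp) ((Module.Basis.span hli) ⟨⟨l, (s, t)⟩, hP⟩)) : A) =
        (((Module.Basis.span hli) ⟨⟨l, (s, t)⟩, hP⟩ : _) : A) := rfl
    rw [hco, Module.Basis.span_apply]
    exact D.basis_eq l s t
end
end

section
/- Let Ã^α be the parabolic type subalgebra of A and (Ã^α)* its image under the anti-automorphism *. Then: (i) Ã^α ∩ (Ã^α)* = A^α; (ii) A = Ã^α · (Ã^α)* = (Ã^α)* · Ã^α. -/
open MulOpposite

noncomputable section

universe u

section AuxStmt14

variable {R A : Type u} [CommRing R] [Ring A] [Algebra R A]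
    {Λp : Type u} [PartialOrder Λp]
    {T : Λp → Type u} [∀ l, Fintype (T l)]
    {Λt M X : Type u} [PartialOrder Λt] [PartialOrder X] [Fintype M]

/-- Index set of the Levi subalgebra inside the basis index type. -/
def idxLevi (D : CellDatum R A Λp T) (ι : Λp → Λt) (κ : M → Λt) (e : M → A) (α : Λt → X) :
    Set ((l : Λp) × (T l × T l)) :=
  {i | ∃ ε, i.2.1 ∈ D.Iset e ι κ α i.1 ε ∧ i.2.2 ∈ D.Iset e ι κ α i.1 ε}

/-- Index set of the parabolic subalgebra. -/
def idxPar (D : CellDatum R A Λp T) (ι : Λp → Λt) (κ : M → Λt) (e : M → A) (α : Λt → X) :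
    Set ((l : Λp) × (T l × T l)) :=
  {i | ∃ ε, i.2.1 ∈ D.Iset e ι κ α i.1 ε ∧ i.2.2 ∈ D.Jset e ι κ α i.1 ε}

/-- Index set of the image of the parabolic subalgebra under star. -/
def idxPar' (D : CellDatum R A Λp T) (ι : Λp → Λt) (κ : M → Λt) (e : M → A) (α : Λt → X) :
    Set ((l : Λp) × (T l × T l)) :=
  {i | ∃ ε, i.2.2 ∈ D.Iset e ι κ α i.1 ε ∧ i.2.1 ∈ D.Jset e ι κ α i.1 ε}

variable (D : CellDatum R A Λp T) (ι : Λp → Λt) (κ : M → Λt) (e : M → A) (α : Λt → X)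

lemma levi_eq_span : D.levi e ι κ α = Submodule.span R (D.basis '' idxLevi D ι κ e α) := by
  unfold CellDatum.levi
  congr 1
  ext x
  constructor
  · rintro ⟨l, ε, s, t, hs, ht, rfl⟩
    exact ⟨⟨l, s, t⟩, ⟨ε, hs, ht⟩, D.basis_eq l s t⟩
  · rintro ⟨⟨l, s, t⟩, ⟨ε, hs, ht⟩, rfl⟩
    exact ⟨l, ε, s, t, hs, ht, D.basis_eq l s t⟩

lemma parab_eq_span : D.parab e ι κ α = Submodule.span R (D.basis '' idxPar D ι κ e α) := by
  unfold CellDatum.parab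
  congr 1
  ext x
  constructor
  · rintro ⟨l, ε, s, t, hs, ht, rfl⟩
    exact ⟨⟨l, s, t⟩, ⟨ε, hs, ht⟩, D.basis_eq l s t⟩
  · rintro ⟨⟨l, s, t⟩, ⟨ε, hs, ht⟩, rfl⟩
    exact ⟨l, ε, s, t, hs, ht, D.basis_eq l s t⟩

lemma map_star_parab_eq_span :
    Submodule.map D.star (D.parab e ι κ α) =
      Submodule.span R (D.basis '' idxPar' D ι κ e α) := by
  rw [parab_eq_span, Submodule.map_span]
  congr 1
  ext x
  constructor
  · rintro ⟨y, ⟨⟨l, s, t⟩, ⟨ε, hs, ht⟩, rfl⟩, rfl⟩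
    refine ⟨⟨l, t, s⟩, ⟨ε, hs, ht⟩, ?_⟩
    rw [D.basis_eq, D.basis_eq, D.star_c]
  · rintro ⟨⟨l, s, t⟩, ⟨ε, ht, hs⟩, rfl⟩
    refine ⟨D.basis ⟨l, t, s⟩, ⟨⟨l, t, s⟩, ⟨ε, ht, hs⟩, rfl⟩, ?_⟩
    rw [D.basis_eq, D.basis_eq, D.star_c]

lemma span_image_inf {ι' N : Type u} [AddCommGroup N] [Module R N]
    (b : Module.Basis ι' R N) (S₁ S₂ : Set ι') :
    Submodule.span R (b '' S₁) ⊓ Submodule.span R (b '' S₂) =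
      Submodule.span R (b '' (S₁ ∩ S₂)) := by
  ext x
  simp only [Submodule.mem_inf, Module.Basis.mem_span_image, Set.subset_inter_iff]

lemma idxPar_inter : idxPar D ι κ e α ∩ idxPar' D ι κ e α = idxLevi D ι κ e α := by
  ext i
  constructor
  · rintro ⟨⟨ε₁, h1, h2⟩, ⟨ε₂, h3, h4⟩⟩
    cases ε₁ with
    | false => exact ⟨false, h1, h2⟩
    | true =>
      cases ε₂ with
      | false => exact ⟨false, h4, h3⟩
      | true => exact ⟨true, h1, h3⟩
  · rintro ⟨ε, h1, h2⟩
    cases ε with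
    | false => exact ⟨⟨false, h1, h2⟩, ⟨false, h2, h1⟩⟩
    | true => exact ⟨⟨true, h1, Set.mem_univ _⟩, ⟨true, h2, Set.mem_univ _⟩⟩

lemma idxLevi_subset_idxPar : idxLevi D ι κ e α ⊆ idxPar D ι κ e α := by
  rintro i ⟨ε, h1, h2⟩
  cases ε with
  | false => exact ⟨false, h1, h2⟩
  | true => exact ⟨true, h1, Set.mem_univ _⟩

lemma idxLevi_subset_idxPar' : idxLevi D ι κ e α ⊆ idxPar' D ι κ e α := by
  rintro i ⟨ε, h1, h2⟩
  cases ε with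
  | false => exact ⟨false, h2, h1⟩
  | true => exact ⟨true, h2, Set.mem_univ _⟩

variable {D ι κ e α}

open Classical in
lemma c_mul_e (hA : D.IdemData ι κ e) {l : Λp} {t : T l} {μ₀ : M}
    (h : t ∈ D.Tset e l μ₀) (ν₀ : M) (s : T l) :
    D.c l s t * e ν₀ = if ν₀ = μ₀ then D.c l s t else 0 := by
  by_cases hc : ν₀ = μ₀
  · rw [if_pos hc, hc, h.1 s]
  · rw [if_neg hc, ← h.1 s, mul_assoc, hA.orth μ₀ ν₀ fun h' => hc h'.symm, mul_zero]

open Classical in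
lemma e_mul_c (hA : D.IdemData ι κ e) {l : Λp} {t : T l} {μ₀ : M}
    (h : t ∈ D.Tset e l μ₀) (ν₀ : M) (u : T l) :
    e ν₀ * D.c l t u = if ν₀ = μ₀ then D.c l t u else 0 := by
  by_cases hc : ν₀ = μ₀
  · rw [if_pos hc, hc, h.2 u]
  · rw [if_neg hc, ← h.2 u, ← mul_assoc, hA.orth ν₀ μ₀ hc, zero_mul]

/-- The span of the basis elements whose first index lies in an upward closed set is a
right ideal. -/
lemma mul_mem_span_upward (P : Set Λp) (hP : ∀ {l l' : Λp}, l ∈ P → l ≤ l' → l' ∈ P)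
    {x : A} (hx : x ∈ Submodule.span R (D.basis '' {i | i.1 ∈ P})) (a : A) :
    x * a ∈ Submodule.span R (D.basis '' {i | i.1 ∈ P}) := by
  induction hx using Submodule.span_induction with
  | mem x hx =>
    obtain ⟨⟨l, s, t⟩, hl, rfl⟩ := hx
    rw [D.basis_eq]
    have hsplit : D.c l s t * a =
        (D.c l s t * a - ∑ v, D.coeff l t a v • D.c l s v) +
          ∑ v, D.coeff l t a v • D.c l s v := by
      rw [sub_add_cancel]
    rw [hsplit]
    refine Submodule.add_mem _ ?_ ?_
    · refine Submodule.span_le.mpr ?_ (D.mul_rule l s t a)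
      rintro x ⟨l', s', t', hlt, rfl⟩
      exact Submodule.subset_span ⟨⟨l', s', t'⟩, hP hl hlt.le, (D.basis_eq _ _ _)⟩
    · exact Submodule.sum_mem _ fun v _ => Submodule.smul_mem _ _
        (Submodule.subset_span ⟨⟨l, s, v⟩, hl, (D.basis_eq _ _ _)⟩)
  | zero => rw [zero_mul]; exact Submodule.zero_mem _
  | add x y _ _ hx hy => rw [add_mul]; exact Submodule.add_mem _ hx hy
  | smul r x _ hx => rw [smul_mul_assoc]; exact Submodule.smul_mem _ _ hx

lemma e_mem_span_upward (hA : D.IdemData ι κ e) (μ : M) :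
    e μ ∈ Submodule.span R (D.basis '' {i | κ μ ≤ ι i.1}) := by
  have hset : {x : A | ∃ l s t, κ μ ≤ ι l ∧ x = D.c l s t} =
      D.basis '' {i : (l : Λp) × (T l × T l) | κ μ ≤ ι i.1} := by
    ext x
    constructor
    · rintro ⟨l, s, t, hl, rfl⟩
      exact ⟨⟨l, s, t⟩, hl, D.basis_eq l s t⟩
    · rintro ⟨⟨l, s, t⟩, hl, rfl⟩
      exact ⟨l, s, t, hl, D.basis_eq l s t⟩
  rw [← hset]
  exact hA.mem_span μ

lemma kappa_le_iota [Nontrivial R] (hA : D.IdemData ι κ e) {l : Λp} {t : T l} {μ : M}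
    (h : t ∈ D.Tset e l μ) : κ μ ≤ ι l := by
  have hP : ∀ {l₁ l₂ : Λp}, l₁ ∈ {l' | κ μ ≤ ι l'} → l₁ ≤ l₂ → l₂ ∈ {l' | κ μ ≤ ι l'} :=
    fun h1 h12 => le_trans h1 ((hA.order_iff _ _).mpr h12)
  have hc : D.basis ⟨l, t, t⟩ ∈
      Submodule.span R (D.basis '' {i | i.1 ∈ {l' | κ μ ≤ ι l'}}) := by
    rw [D.basis_eq, ← h.2 t]
    exact mul_mem_span_upward _ hP (e_mem_span_upward hA μ) (D.c l t t)
  exact D.basis.self_mem_span_image.mp hc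

lemma tplus_or_tminus [Nontrivial R] (hA : D.IdemData ι κ e) (hα : Monotone α)
    (l : Λp) (t : T l) :
    t ∈ D.Tplus e ι κ α l ∨ t ∈ D.Tminus e ι κ α l := by
  obtain ⟨μ, h1, h2⟩ := hA.exists_idem l t
  have ht : t ∈ D.Tset e l μ := ⟨h1, h2⟩
  rcases (hα (kappa_le_iota hA ht)).lt_or_eq with hlt | heq
  · exact Or.inr ⟨μ, ht, hlt⟩
  · exact Or.inl ⟨μ, ht, heq.symm⟩
lemma e_mem_levi [Fintype Λp] [Nontrivial R] (hA : D.IdemData ι κ e) (hα : Monotone α)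
    (μ : M) : e μ ∈ D.levi e ι κ α := by
  classical
  choose νf hν1 hν2 using hA.exists_idem
  have hνmem : ∀ (l) (t : T l), t ∈ D.Tset e l (νf l t) := fun l t => ⟨hν1 l t, hν2 l t⟩
  set f := D.basis.repr (e μ) with hf
  have hκ : ↑f.support ⊆ {i : (l : Λp) × (T l × T l) | κ μ ≤ ι i.1} :=
    D.basis.mem_span_image.mp (e_mem_span_upward hA μ)
  have hrepr : ∑ i : (l : Λp) × (T l × T l), f i • D.basis i = e μ := D.basis.sum_repr (e μ)
  have claimA : ∀ j : (l : Λp) × (T l × T l), j ∈ f.support → νf j.1 j.2.2 = μ := by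
    intro j hj
    by_contra hne
    have hmul : (0 : A) = ∑ i : (l : Λp) × (T l × T l),
        (if νf i.1 i.2.2 = νf j.1 j.2.2 then f i else 0) • D.basis i := by
      calc (0 : A) = e μ * e (νf j.1 j.2.2) := (hA.orth _ _ fun h => hne h.symm).symm
        _ = (∑ i : (l : Λp) × (T l × T l), f i • D.basis i) * e (νf j.1 j.2.2) := by
            rw [hrepr]
        _ = ∑ i : (l : Λp) × (T l × T l), (f i • D.basis i) * e (νf j.1 j.2.2) := by
            rw [Finset.sum_mul]
        _ = _ := by
            refine Finset.sum_congr rfl fun i _ => ?_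
            obtain ⟨l, s, t⟩ := i
            rw [smul_mul_assoc, D.basis_eq, c_mul_e hA (hνmem l t) _ s]
            by_cases hc : νf l t = νf j.1 j.2.2
            · rw [if_pos hc.symm, if_pos hc]
            · rw [if_neg fun h => hc h.symm, if_neg hc, smul_zero, zero_smul]
    have hz := linearIndependent_iff'.mp D.basis.linearIndependent Finset.univ
      (fun i => if νf i.1 i.2.2 = νf j.1 j.2.2 then f i else 0) hmul.symm j (Finset.mem_univ j)
    exact Finsupp.mem_support_iff.mp hj (by simpa using hz)
  have claimB : ∀ j : (l : Λp) × (T l × T l), j ∈ f.support → νf j.1 j.2.1 = μ := by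
    intro j hj
    by_contra hne
    have hmul : (0 : A) = ∑ i : (l : Λp) × (T l × T l),
        (if νf i.1 i.2.1 = νf j.1 j.2.1 then f i else 0) • D.basis i := by
      calc (0 : A) = e (νf j.1 j.2.1) * e μ := (hA.orth _ _ hne).symm
        _ = e (νf j.1 j.2.1) * ∑ i : (l : Λp) × (T l × T l), f i • D.basis i := by
            rw [hrepr]
        _ = ∑ i : (l : Λp) × (T l × T l), e (νf j.1 j.2.1) * (f i • D.basis i) := by
            rw [Finset.mul_sum]
        _ = _ := by
            refine Finset.sum_congr rfl fun i _ => ?_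
            obtain ⟨l, s, t⟩ := i
            rw [mul_smul_comm, D.basis_eq, e_mul_c hA (hνmem l s) _ t]
            by_cases hc : νf l s = νf j.1 j.2.1
            · rw [if_pos hc.symm, if_pos hc]
            · rw [if_neg fun h => hc h.symm, if_neg hc, smul_zero, zero_smul]
    have hz := linearIndependent_iff'.mp D.basis.linearIndependent Finset.univ
      (fun i => if νf i.1 i.2.1 = νf j.1 j.2.1 then f i else 0) hmul.symm j (Finset.mem_univ j)
    exact Finsupp.mem_support_iff.mp hj (by simpa using hz)
  rw [levi_eq_span, Module.Basis.mem_span_image]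
  intro j hj
  have hs : j.2.1 ∈ D.Tset e j.1 μ := claimB j hj ▸ hνmem j.1 j.2.1
  have ht : j.2.2 ∈ D.Tset e j.1 μ := claimA j hj ▸ hνmem j.1 j.2.2
  rcases (hα (hκ hj)).lt_or_eq with hlt | heq
  · exact ⟨true, ⟨μ, hs, hlt⟩, ⟨μ, ht, hlt⟩⟩
  · exact ⟨false, ⟨μ, hs, heq.symm⟩, ⟨μ, ht, heq.symm⟩⟩

end AuxStmt14


/-- (i) `Ã^α ∩ (Ã^α)* = A^α`; (ii) `A = Ã^α · (Ã^α)* = (Ã^α)* · Ã^α`. -/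
theorem stmt_14
    {R A : Type u} [CommRing R] [Ring A] [Algebra R A]
    {Λp : Type u} [PartialOrder Λp] [Fintype Λp]
    {T : Λp → Type u} [∀ l, Fintype (T l)]
    {Λt M X : Type u} [PartialOrder Λt] [PartialOrder X] [Fintype M]
    (D : CellDatum R A Λp T)
    (ι : Λp → Λt) (κ : M → Λt) (e : M → A)
    (hA : D.IdemData ι κ e)
    (α : Λt → X) (hα : Monotone α) :
    D.parab e ι κ α ⊓ Submodule.map D.star (D.parab e ι κ α) = D.levi e ι κ α ∧
    Submodule.span R {z : A | ∃ u ∈ D.parab e ι κ α,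
      ∃ v ∈ Submodule.map D.star (D.parab e ι κ α), z = u * v} = ⊤ ∧
    Submodule.span R {z : A | ∃ u ∈ Submodule.map D.star (D.parab e ι κ α),
      ∃ v ∈ D.parab e ι κ α, z = u * v} = ⊤ := by
  classical
  rcases subsingleton_or_nontrivial R with hR | hR
  · have hz : ∀ x : A, x = 0 := fun x => by
      rw [← one_smul R x, Subsingleton.elim (1 : R) 0, zero_smul]
    have hpq : ∀ p q : Submodule R A, p = q := fun p q => by
      ext x
      rw [hz x]
      simp
    exact ⟨hpq _ _, hpq _ _, hpq _ _⟩
  have h1levi : (1 : A) ∈ D.levi e ι κ α := by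
    rw [← hA.sum_one]
    exact Submodule.sum_mem _ fun μ _ => e_mem_levi hA hα μ
  have h1p : (1 : A) ∈ D.parab e ι κ α := by
    have hle : D.levi e ι κ α ≤ D.parab e ι κ α := by
      rw [levi_eq_span, parab_eq_span]
      exact Submodule.span_mono (Set.image_mono (idxLevi_subset_idxPar D ι κ e α))
    exact hle h1levi
  have h1p' : (1 : A) ∈ Submodule.map D.star (D.parab e ι κ α) := by
    have hle : D.levi e ι κ α ≤ Submodule.map D.star (D.parab e ι κ α) := by
      rw [levi_eq_span, map_star_parab_eq_span]
      exact Submodule.span_mono (Set.image_mono (idxLevi_subset_idxPar' D ι κ e α))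
    exact hle h1levi
  refine ⟨?_, ?_, ?_⟩
  · rw [map_star_parab_eq_span, parab_eq_span, span_image_inf, idxPar_inter, ← levi_eq_span]
  · rw [eq_top_iff, ← D.basis.span_eq]
    refine Submodule.span_le.mpr ?_
    rintro x ⟨⟨l, s, t⟩, rfl⟩
    rw [D.basis_eq]
    rcases tplus_or_tminus hA hα l s with hsp | hsm
    · rcases tplus_or_tminus hA hα l t with htp | htm
      · refine Submodule.subset_span ⟨D.c l s t, ?_, 1, h1p', (mul_one _).symm⟩
        exact Submodule.subset_span ⟨l, false, s, t, hsp, htp, rfl⟩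
      · refine Submodule.subset_span ⟨1, h1p, D.c l s t, ?_, (one_mul _).symm⟩
        rw [map_star_parab_eq_span]
        exact Submodule.subset_span ⟨⟨l, s, t⟩, ⟨true, htm, Set.mem_univ _⟩, D.basis_eq l s t⟩
    · refine Submodule.subset_span ⟨D.c l s t, ?_, 1, h1p', (mul_one _).symm⟩
      exact Submodule.subset_span ⟨l, true, s, t, hsm, Set.mem_univ _, rfl⟩
  · rw [eq_top_iff, ← D.basis.span_eq]
    refine Submodule.span_le.mpr ?_
    rintro x ⟨⟨l, s, t⟩, rfl⟩
    rw [D.basis_eq]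
    rcases tplus_or_tminus hA hα l t with htp | htm
    · rcases tplus_or_tminus hA hα l s with hsp | hsm
      · refine Submodule.subset_span ⟨D.c l s t, ?_, 1, h1p, (mul_one _).symm⟩
        rw [map_star_parab_eq_span]
        exact Submodule.subset_span ⟨⟨l, s, t⟩, ⟨false, htp, hsp⟩, D.basis_eq l s t⟩
      · refine Submodule.subset_span ⟨1, h1p', D.c l s t, ?_, (one_mul _).symm⟩
        exact Submodule.subset_span ⟨l, true, s, t, hsm, Set.mem_univ _, rfl⟩
    · refine Submodule.subset_span ⟨D.c l s t, ?_, 1, h1p, (mul_one _).symm⟩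
      rw [map_star_parab_eq_span]
      exact Submodule.subset_span ⟨⟨l, s, t⟩, ⟨true, htm, Set.mem_univ _⟩, D.basis_eq l s t⟩
end
end

section
/- For λ ∈ Λ⁺, restriction from Ã^α to A^α gives: (i) Z̃^{(λ,0)} ≅ Z^{(λ,0)}; (ii) Z̃^{(λ,1)} ≅ Z^{(λ,0)} ⊕ Z^{(λ,1)}; (iii) L̃^{(λ,0)} ≅ L^{(λ,0)}; (iv) L̃^{(λ,1)} ≅ L^{(λ,1)}, all as A^α-modules. -/
open MulOpposite

noncomputable section

universe u

section AuxPf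

variable {R A : Type u} [CommRing R] [Ring A] [Algebra R A]
variable {Λp : Type u} [PartialOrder Λp] {T : Λp → Type u} [∀ l, Fintype (T l)]

namespace CellDatum
variable (D : CellDatum R A Λp T)

theorem pf_mul_mem_cellSpan {P : Set Λp} (hP : ∀ ⦃l l'⦄, l ∈ P → l ≤ l' → l' ∈ P)
    {x : A} (hx : x ∈ D.cellSpan P) (a : A) : x * a ∈ D.cellSpan P := by
  induction hx using Submodule.span_induction with
  | mem x hx =>
    obtain ⟨l, s, t, hl, rfl⟩ := hx
    have h1 := D.mul_rule l s t a
    have h2 : D.c l s t * a = (D.c l s t * a - ∑ v, D.coeff l t a v • D.c l s v)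
        + ∑ v, D.coeff l t a v • D.c l s v := by abel
    rw [h2]
    refine Submodule.add_mem _ ?_ (Submodule.sum_mem _ fun v _ => Submodule.smul_mem _ _
      (Submodule.subset_span ⟨l, s, v, hl, rfl⟩))
    refine Submodule.span_le.2 ?_ h1
    rintro y ⟨l', s', t', hlt, rfl⟩
    exact Submodule.subset_span ⟨l', s', t', hP hl hlt.le, rfl⟩
  | zero => simpa using Submodule.zero_mem _
  | add x y _ _ ihx ihy => rw [add_mul]; exact Submodule.add_mem _ ihx ihy
  | smul r x _ ih => rw [smul_mul_assoc]; exact Submodule.smul_mem _ _ ih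

theorem pf_star_mem_cellSpan {P : Set Λp} {x : A} (hx : x ∈ D.cellSpan P) :
    D.star x ∈ D.cellSpan P := by
  induction hx using Submodule.span_induction with
  | mem x hx =>
    obtain ⟨l, s, t, hl, rfl⟩ := hx
    rw [D.star_c]
    exact Submodule.subset_span ⟨l, t, s, hl, rfl⟩
  | zero => rw [map_zero]; exact Submodule.zero_mem _
  | add x y _ _ ihx ihy => rw [map_add]; exact Submodule.add_mem _ ihx ihy
  | smul r x _ ih => rw [map_smul]; exact Submodule.smul_mem _ _ ih

theorem pf_repr_c (l : Λp) (s t : T l) :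
    D.basis.repr (D.c l s t) = Finsupp.single ⟨l, (s, t)⟩ 1 := by
  rw [← D.basis_eq]; exact D.basis.repr_self _

theorem pf_repr_eq_zero {P : Set Λp} {x : A} (hx : x ∈ D.cellSpan P)
    {l : Λp} (hl : l ∉ P) (s t : T l) : D.basis.repr x ⟨l, (s, t)⟩ = 0 := by
  classical
  induction hx using Submodule.span_induction with
  | mem x hx =>
    obtain ⟨l', s', t', hl', rfl⟩ := hx
    rw [pf_repr_c, Finsupp.single_apply, if_neg]
    intro h
    injection h with h1 h2
    exact hl (h1 ▸ hl')
  | zero => simp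
  | add x y _ _ ihx ihy => rw [map_add, Finsupp.add_apply, ihx, ihy, add_zero]
  | smul r x _ ih => rw [map_smul, Finsupp.smul_apply, ih, smul_zero]

theorem pf_coeff_eq_repr (l : Λp) (s t v : T l) (b : A) :
    D.coeff l t b v = D.basis.repr (D.c l s t * b) ⟨l, (s, v)⟩ := by
  classical
  have h1 : D.c l s t * b - ∑ w, D.coeff l t b w • D.c l s w ∈ D.cellSpan {l' | l < l'} :=
    D.mul_rule l s t b
  have h2 : D.c l s t * b = (∑ w, D.coeff l t b w • D.c l s w) +
      (D.c l s t * b - ∑ w, D.coeff l t b w • D.c l s w) := by abel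
  rw [h2, map_add, Finsupp.add_apply, pf_repr_eq_zero D h1 (by simp) s v, add_zero, map_sum,
    Finsupp.finset_sum_apply]
  simp only [map_smul, Finsupp.smul_apply, pf_repr_c, Finsupp.single_apply, smul_eq_mul]
  rw [Finset.sum_eq_single v]
  · rw [if_pos rfl, mul_one]
  · intro w _ hw
    rw [if_neg, mul_zero]
    intro h
    injection h with h1 h2
    exact hw (congrArg Prod.snd h2)
  · intro h; exact absurd (Finset.mem_univ v) h

end CellDatum
end AuxPf
section AuxPf2

variable {R A : Type u} [CommRing R] [Ring A] [Algebra R A]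
variable {Λp : Type u} [PartialOrder Λp] {T : Λp → Type u} [∀ l, Fintype (T l)]
variable {Λt M X : Type u} [PartialOrder Λt] [PartialOrder X] [Fintype M]

namespace CellDatum
variable (D : CellDatum R A Λp T)
variable {ι : Λp → Λt} {κ : M → Λt} {e : M → A} {α : Λt → X}

theorem pf_c_ne_zero [Nontrivial R] (l : Λp) (s t : T l) : D.c l s t ≠ 0 := by
  rw [← D.basis_eq]; exact D.basis.ne_zero _

theorem pf_iota_mono (hA : D.IdemData ι κ e) {l l' : Λp} (h : l ≤ l') : ι l ≤ ι l' :=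
  (hA.order_iff l l').2 h

theorem pf_tset_unique [Nontrivial R] (hA : D.IdemData ι κ e) {l : Λp} {t : T l} {μ ν : M}
    (h1 : t ∈ D.Tset e l μ) (h2 : t ∈ D.Tset e l ν) : μ = ν := by
  by_contra hne
  have h3 : D.c l t t = 0 := by
    calc D.c l t t = (D.c l t t * e ν) * e μ := by rw [h2.1, h1.1]
    _ = D.c l t t * (e ν * e μ) := mul_assoc _ _ _
    _ = 0 := by rw [hA.orth ν μ (Ne.symm hne), mul_zero]
  exact D.pf_c_ne_zero l t t h3

theorem pf_mem_plus_or_minus [Nontrivial R] (hA : D.IdemData ι κ e) (hα : Monotone α)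
    (l : Λp) (t : T l) : t ∈ D.Tplus e ι κ α l ∨ t ∈ D.Tminus e ι κ α l := by
  classical
  obtain ⟨μ, h1, h2⟩ := hA.exists_idem l t
  have ht : t ∈ D.Tset e l μ := ⟨h1, h2⟩
  have hc : D.c l t t ∈ D.cellSpan {l' | κ μ ≤ ι l'} := by
    rw [← h2 t]
    exact D.pf_mul_mem_cellSpan
      (fun l1 l2 hm hle => le_trans hm (D.pf_iota_mono hA hle)) (hA.mem_span μ) _
  have hl : κ μ ≤ ι l := by
    by_contra hn
    have := D.pf_repr_eq_zero hc hn t t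
    rw [pf_repr_c, Finsupp.single_apply, if_pos rfl] at this
    exact one_ne_zero this
  rcases lt_or_eq_of_le (hα hl) with hlt | heq
  · exact Or.inr ⟨μ, ht, hlt⟩
  · exact Or.inl ⟨μ, ht, heq.symm⟩

theorem pf_not_plus_minus [Nontrivial R] (hA : D.IdemData ι κ e) {l : Λp} {t : T l}
    (h1 : t ∈ D.Tplus e ι κ α l) (h2 : t ∈ D.Tminus e ι κ α l) : False := by
  obtain ⟨μ, hμ, he⟩ := h1
  obtain ⟨ν, hν, hlt⟩ := h2
  cases D.pf_tset_unique hA hμ hν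
  exact absurd (he ▸ hlt) (lt_irrefl _)

theorem pf_iset_elim {l : Λp} {t : T l} {ε : Bool} (h : t ∈ D.Iset e ι κ α l ε) :
    ∃ μ, t ∈ D.Tset e l μ ∧
      ((ε = false ∧ α (ι l) = α (κ μ)) ∨ (ε = true ∧ α (κ μ) < α (ι l))) := by
  cases ε with
  | false => obtain ⟨μ, hμ, hp⟩ := h; exact ⟨μ, hμ, Or.inl ⟨rfl, hp⟩⟩
  | true => obtain ⟨μ, hμ, hp⟩ := h; exact ⟨μ, hμ, Or.inr ⟨rfl, hp⟩⟩

/-- The key constraint lemma. -/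
theorem pf_key [Nontrivial R] (hA : D.IdemData ι κ e) {l : Λp} {t v : T l} {μ ν : M}
    (ht : t ∈ D.Tset e l μ) (hv : v ∈ D.Tset e l ν)
    {l' : Λp} {s' t' : T l'} {μ' ν' : M}
    (hs' : s' ∈ D.Tset e l' μ') (ht' : t' ∈ D.Tset e l' ν')
    (h : D.coeff l t (D.c l' s' t') v ≠ 0) : μ' = μ ∧ ν' = ν ∧ l' ≤ l := by
  classical
  rw [D.pf_coeff_eq_repr l t t v] at h
  refine ⟨?_, ?_, ?_⟩
  · -- μ' = μ
    by_contra hne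
    apply h
    have hz : D.c l t t * D.c l' s' t' = 0 := by
      calc D.c l t t * D.c l' s' t' = (D.c l t t * e μ) * (e μ' * D.c l' s' t') := by
            rw [ht.1 t, hs'.2 t']
        _ = D.c l t t * ((e μ * e μ') * D.c l' s' t') := by
            rw [mul_assoc, ← mul_assoc (e μ)]
        _ = 0 := by rw [hA.orth μ μ' (fun hh => hne hh.symm), zero_mul, mul_zero]
    rw [hz, map_zero]; rfl
  · -- ν' = ν
    by_contra hne
    apply h
    rw [← D.pf_coeff_eq_repr l t t v]
    have hz : D.c l' s' t' * e ν = 0 := by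
      calc D.c l' s' t' * e ν = (D.c l' s' t' * e ν') * e ν := by rw [ht'.1 s']
        _ = D.c l' s' t' * (e ν' * e ν) := mul_assoc _ _ _
        _ = 0 := by rw [hA.orth ν' ν hne, mul_zero]
    have h5 : (D.c l t t * D.c l' s' t' - ∑ w, D.coeff l t (D.c l' s' t') w • D.c l t w) * e ν
        ∈ D.cellSpan {l'' | l < l''} :=
      D.pf_mul_mem_cellSpan (fun l1 l2 hm hle => lt_of_lt_of_le hm hle)
        (D.mul_rule l t t (D.c l' s' t')) _
    rw [sub_mul, mul_assoc, hz, mul_zero, zero_sub] at h5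
    have h6 := neg_mem h5
    rw [neg_neg, Finset.sum_mul] at h6
    have h7 := D.pf_repr_eq_zero h6 (fun hc => lt_irrefl l hc) t v
    rw [map_sum, Finsupp.finset_sum_apply] at h7
    have hsum : ∑ i : T l, (D.basis.repr (D.coeff l t (D.c l' s' t') i • D.c l t i * e ν))
        ⟨l, (t, v)⟩ = D.coeff l t (D.c l' s' t') v := by
      rw [Finset.sum_eq_single v]
      · rw [smul_mul_assoc, hv.1 t, map_smul, Finsupp.smul_apply, pf_repr_c,
          Finsupp.single_apply, if_pos rfl, smul_eq_mul, mul_one]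
      · intro w _ hw
        obtain ⟨ρ, hw1, hw2⟩ := hA.exists_idem l w
        by_cases hρ : ρ = ν
        · subst hρ
          rw [smul_mul_assoc, hw1 t, map_smul, Finsupp.smul_apply, pf_repr_c,
            Finsupp.single_apply, if_neg, smul_eq_mul, mul_zero]
          intro hcontra
          injection hcontra with hc1 hc2
          exact hw (congrArg Prod.snd hc2)
        · have hzz : D.c l t w * e ν = 0 := by
            calc D.c l t w * e ν = (D.c l t w * e ρ) * e ν := by rw [hw1 t]
              _ = D.c l t w * (e ρ * e ν) := mul_assoc _ _ _
              _ = 0 := by rw [hA.orth ρ ν hρ, mul_zero]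
          rw [smul_mul_assoc, hzz, smul_zero, map_zero]; rfl
      · intro hcontra; exact absurd (Finset.mem_univ v) hcontra
    exact hsum.symm.trans h7
  · -- l' ≤ l
    by_contra hnl
    apply h
    have h1 : D.c l' t' s' * D.c l t t ∈ D.cellSpan {l'' | l' ≤ l''} :=
      D.pf_mul_mem_cellSpan (fun l1 l2 hm hle => le_trans hm hle)
        (Submodule.subset_span ⟨l', t', s', le_refl l', rfl⟩) _
    have h2 := D.pf_star_mem_cellSpan h1
    rw [D.star_mul, D.star_c, D.star_c] at h2
    exact D.pf_repr_eq_zero h2 hnl t v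

end CellDatum
end AuxPf2
section AuxPf3

variable {R A : Type u} [CommRing R] [Ring A] [Algebra R A]
variable {Λp : Type u} [PartialOrder Λp] {T : Λp → Type u} [∀ l, Fintype (T l)]
variable {Λt M X : Type u} [PartialOrder Λt] [PartialOrder X] [Fintype M]

namespace CellDatum
variable (D : CellDatum R A Λp T)
variable {ι : Λp → Λt} {κ : M → Λt} {e : M → A} {α : Λt → X}

/-- Structure constants of elements of the Levi subalgebra vanish between the
two parts of `T(l)`. -/
theorem pf_coeff_vanish [Nontrivial R] (hA : D.IdemData ι κ e) (hα : Monotone α)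
    {l : Λp} {t v : T l} {ε₁ ε₂ : Bool} (hne : ε₁ ≠ ε₂)
    (ht : t ∈ D.Iset e ι κ α l ε₁) (hv : v ∈ D.Iset e ι κ α l ε₂)
    {a : A} (ha : a ∈ D.levi e ι κ α) : D.coeff l t a v = 0 := by
  obtain ⟨μ, htμ, hμ⟩ := D.pf_iset_elim ht
  obtain ⟨ν, hvν, hν⟩ := D.pf_iset_elim hv
  rw [D.pf_coeff_eq_repr l t t v]
  induction ha using Submodule.span_induction with
  | mem x hx =>
    obtain ⟨l', ε', s', t', hs', ht', rfl⟩ := hx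
    rw [← D.pf_coeff_eq_repr l t t v]
    by_contra h0
    obtain ⟨μ', hsμ', hμ'⟩ := D.pf_iset_elim hs'
    obtain ⟨ν', htν', hν'⟩ := D.pf_iset_elim ht'
    obtain ⟨hμeq, hνeq, hll⟩ := D.pf_key hA htμ hvν hsμ' htν' h0
    subst hμeq; subst hνeq
    have hll' : α (ι l') ≤ α (ι l) := hα (D.pf_iota_mono hA hll)
    -- derive a contradiction
    rcases hμ with ⟨hε₁, h3⟩ | ⟨hε₁, h3⟩ <;> rcases hν with ⟨hε₂, h4⟩ | ⟨hε₂, h4⟩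
    · exact hne (hε₁.trans hε₂.symm)
    · rcases hμ' with ⟨hf, h1⟩ | ⟨hf, h1⟩ <;> rcases hν' with ⟨hg, h2⟩ | ⟨hg, h2⟩
      · have hmn : α (κ μ') = α (κ ν') := h1.symm.trans h2
        exact absurd h4 (by rw [← hmn, ← h3]; exact lt_irrefl _)
      · exact Bool.noConfusion (hf.symm.trans hg)
      · exact Bool.noConfusion (hg.symm.trans hf)
      · exact absurd (lt_of_lt_of_le h1 hll') (by rw [← h3]; exact lt_irrefl _)
    · rcases hμ' with ⟨hf, h1⟩ | ⟨hf, h1⟩ <;> rcases hν' with ⟨hg, h2⟩ | ⟨hg, h2⟩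
      · have hmn : α (κ μ') = α (κ ν') := h1.symm.trans h2
        exact absurd h3 (by rw [hmn, ← h4]; exact lt_irrefl _)
      · exact Bool.noConfusion (hf.symm.trans hg)
      · exact Bool.noConfusion (hg.symm.trans hf)
      · exact absurd (lt_of_lt_of_le h2 hll') (by rw [← h4]; exact lt_irrefl _)
    · exact hne (hε₁.trans hε₂.symm)
  | zero => rw [mul_zero, map_zero]; rfl
  | add x y _ _ ihx ihy => rw [mul_add, map_add, Finsupp.add_apply, ihx, ihy, add_zero]
  | smul r x _ ih => rw [mul_smul_comm, map_smul, Finsupp.smul_apply, ih, smul_zero]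

/-- The bilinear form vanishes between the two parts of `T(l)`. -/
theorem pf_phi_vanish [Nontrivial R] (hA : D.IdemData ι κ e)
    {φ : ∀ l, T l → T l → R} (hφ : D.FormData φ)
    {l : Λp} {t s : T l} {ε₁ ε₂ : Bool} (hne : ε₁ ≠ ε₂)
    (ht : t ∈ D.Iset e ι κ α l ε₁) (hs : s ∈ D.Iset e ι κ α l ε₂) : φ l t s = 0 := by
  classical
  obtain ⟨μ, htμ, hμ⟩ := D.pf_iset_elim ht
  obtain ⟨ν, hsν, hν⟩ := D.pf_iset_elim hs
  have hμν : μ ≠ ν := by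
    rintro rfl
    rcases hμ with ⟨hε₁, h1⟩ | ⟨hε₁, h1⟩ <;> rcases hν with ⟨hε₂, h2⟩ | ⟨hε₂, h2⟩
    · exact hne (hε₁.trans hε₂.symm)
    · exact absurd h2 (by rw [← h1]; exact lt_irrefl _)
    · exact absurd h1 (by rw [← h2]; exact lt_irrefl _)
    · exact hne (hε₁.trans hε₂.symm)
  have hzero : D.c l t t * D.c l s s = 0 := by
    calc D.c l t t * D.c l s s = (D.c l t t * e μ) * (e ν * D.c l s s) := by
          rw [htμ.1 t, hsν.2 s]
      _ = D.c l t t * ((e μ * e ν) * D.c l s s) := by rw [mul_assoc, ← mul_assoc (e μ)]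
      _ = 0 := by rw [hA.orth μ ν hμν, zero_mul, mul_zero]
  have hform : D.c l t t * D.c l s s - φ l t s • D.c l t s ∈ D.cellSpan {l' | l < l'} :=
    hφ l t s t s
  rw [hzero, zero_sub] at hform
  have h2 := neg_mem hform
  rw [neg_neg] at h2
  have h3 := D.pf_repr_eq_zero h2 (fun hc => lt_irrefl l hc) t s
  rw [map_smul, Finsupp.smul_apply, pf_repr_c, Finsupp.single_apply, if_pos rfl,
    smul_eq_mul, mul_one] at h3
  exact h3

end CellDatum

theorem pf_sum_univ_eq {γ β : Type u} [AddCommMonoid β] (F1 F2 : Fintype γ) (f : γ → β) :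
    @Finset.sum γ β _ (@Finset.univ γ F1) f = @Finset.sum γ β _ (@Finset.univ γ F2) f := by
  cases Subsingleton.elim F1 F2; rfl

theorem pf_sum_split {γ β : Type u} [Fintype γ] [AddCommMonoid β] {P0 P1 : Set γ}
    (F1 : Fintype ↥P1) (hcover : ∀ t, t ∈ P0 ∨ t ∈ P1)
    (h : γ → β) (h0 : ∀ t, t ∈ P0 → h t = 0) :
    ∑ t, h t = ∑ s : ↥P1, h s.1 := by
  classical
  rw [← Fintype.sum_subtype_add_sum_subtype (fun t => t ∈ P1) h]
  have hz : ∑ i : { x : γ // ¬x ∈ P1 }, h i.1 = 0 :=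
    Finset.sum_eq_zero (fun i _ => h0 i.1 ((hcover i.1).resolve_right i.2))
  rw [hz, add_zero]
  exact pf_sum_univ_eq _ _ _

end AuxPf3
theorem pf_pi_decomp {R γ : Type u} [CommRing R] [Fintype γ] [DecidableEq γ] (x : γ → R) :
    ∑ t, x t • (Pi.single t (1 : R) : γ → R) = x := by
  have h : ∀ t : γ, x t • (Pi.single t (1 : R) : γ → R) = Pi.single t (x t) := by
    intro t; funext j
    simp [Pi.single_apply, mul_ite]
  simp_rw [h]
  exact Finset.univ_sum_single x
set_option maxHeartbeats 1000000 in
set_option synthInstance.maxHeartbeats 200000 in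
/-- restriction from `Ã^α` to `A^α` of the standard and simple modules:
(i) `Z̃^{(λ,0)} ≅ Z^{(λ,0)}`; (ii) `Z̃^{(λ,1)} ≅ Z^{(λ,0)} ⊕ Z^{(λ,1)}`;
(iii) `L̃^{(λ,0)} ≅ L^{(λ,0)}`; (iv) `L̃^{(λ,1)} ≅ L^{(λ,1)}`, all as `A^α`-modules. -/
theorem stmt_15
    {R A : Type u} [CommRing R] [Ring A] [Algebra R A]
    {Λp : Type u} [PartialOrder Λp] [Fintype Λp]
    {T : Λp → Type u} [∀ l, Fintype (T l)] [∀ l, DecidableEq (T l)]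
    {Λt M X : Type u} [PartialOrder Λt] [PartialOrder X] [Fintype M]
    (D : CellDatum R A Λp T)
    (ι : Λp → Λt) (κ : M → Λt) (e : M → A)
    (hA : D.IdemData ι κ e)
    (α : Λt → X) (hα : Monotone α)
    (φ : ∀ l, T l → T l → R) (hφ : D.FormData φ)
    -- the Levi type subalgebra `A^α` and its standard module data
    (Asub : Subalgebra R A) (hAsub : Asub.toSubmodule = D.levi e ι κ α)
    [∀ (l : Λp) (ε : Bool), Fintype ↥(D.Iset e ι κ α l ε)]
    [∀ (l : Λp) (ε : Bool), Module (↥Asub)ᵐᵒᵖ (↥(D.Iset e ι κ α l ε) → R)]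
    (hZsmul : ∀ (l : Λp) (ε : Bool) (r : R) (a : (↥Asub)ᵐᵒᵖ)
      (x : ↥(D.Iset e ι κ α l ε) → R), a • (r • x) = r • (a • x))
    (hZact : ∀ (l : Λp) (ε : Bool) (t : ↥(D.Iset e ι κ α l ε)) (a : Asub),
      (op a) • (Pi.single t 1 : ↥(D.Iset e ι κ α l ε) → R) =
        fun v => D.coeff l t.1 a.1 v.1)
    (radZ : ∀ (l : Λp) (ε : Bool), Submodule (↥Asub)ᵐᵒᵖ (↥(D.Iset e ι κ α l ε) → R))
    (hradZ : ∀ (l : Λp) (ε : Bool) (x : ↥(D.Iset e ι κ α l ε) → R),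
      x ∈ radZ l ε ↔ ∀ y,
        formSum (fun s t : ↥(D.Iset e ι κ α l ε) => φ l s.1 t.1) x y = 0)
    -- the parabolic type subalgebra `Ã^α` and its right standard module data
    (Asubt : Subalgebra R A) (hAsubt : Asubt.toSubmodule = D.parab e ι κ α)
    (hle : Asub ≤ Asubt)
    [∀ (l : Λp) (ε : Bool), Fintype ↥(D.Jset e ι κ α l ε)]
    [∀ (l : Λp) (ε : Bool), Module (↥Asubt)ᵐᵒᵖ (↥(D.Jset e ι κ α l ε) → R)]
    (hZtsmul : ∀ (l : Λp) (ε : Bool) (r : R) (a : (↥Asubt)ᵐᵒᵖ)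
      (x : ↥(D.Jset e ι κ α l ε) → R), a • (r • x) = r • (a • x))
    (hZtact : ∀ (l : Λp) (ε : Bool) (t : ↥(D.Jset e ι κ α l ε)) (a : Asubt),
      (op a) • (Pi.single t 1 : ↥(D.Jset e ι κ α l ε) → R) =
        fun v => D.coeff l t.1 a.1 v.1)
    (radZt : ∀ (l : Λp) (ε : Bool), Submodule (↥Asubt)ᵐᵒᵖ (↥(D.Jset e ι κ α l ε) → R))
    (hradZt : ∀ (l : Λp) (ε : Bool) (x : ↥(D.Jset e ι κ α l ε) → R),
      x ∈ radZt l ε ↔ ∀ s : ↥(D.Iset e ι κ α l ε),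
        ∑ t, x t * φ l t.1 s.1 = 0) :
    ∀ l : Λp,
      letI : Module (↥Asub)ᵐᵒᵖ (↥(D.Jset e ι κ α l false) → R) :=
        Module.compHom _ (RingHom.op (Subalgebra.inclusion hle).toRingHom)
      letI : Module (↥Asub)ᵐᵒᵖ (↥(D.Jset e ι κ α l true) → R) :=
        Module.compHom _ (RingHom.op (Subalgebra.inclusion hle).toRingHom)
      letI : Module (↥Asub)ᵐᵒᵖ ((↥(D.Jset e ι κ α l false) → R) ⧸ radZt l false) :=
        Module.compHom _ (RingHom.op (Subalgebra.inclusion hle).toRingHom)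
      letI : Module (↥Asub)ᵐᵒᵖ ((↥(D.Jset e ι κ α l true) → R) ⧸ radZt l true) :=
        Module.compHom _ (RingHom.op (Subalgebra.inclusion hle).toRingHom)
      -- (i)
      (∃ F : (↥(D.Jset e ι κ α l false) → R) ≃ₗ[(↥Asub)ᵐᵒᵖ]
          (↥(D.Iset e ι κ α l false) → R),
        ∀ t : ↥(D.Jset e ι κ α l false),
          F (Pi.single t 1) = Pi.single (⟨t.1, t.2⟩ : ↥(D.Iset e ι κ α l false)) 1) ∧
      -- (ii)
      (∃ F : (↥(D.Jset e ι κ α l true) → R) ≃ₗ[(↥Asub)ᵐᵒᵖ]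
          ((↥(D.Iset e ι κ α l false) → R) × (↥(D.Iset e ι κ α l true) → R)),
        (∀ (t : T l) (h : t ∈ D.Iset e ι κ α l false),
          F (Pi.single (⟨t, Set.mem_univ t⟩ : ↥(D.Jset e ι κ α l true)) 1) =
            (Pi.single ⟨t, h⟩ 1, 0)) ∧
        (∀ (t : T l) (h : t ∈ D.Iset e ι κ α l true),
          F (Pi.single (⟨t, Set.mem_univ t⟩ : ↥(D.Jset e ι κ α l true)) 1) =
            (0, Pi.single ⟨t, h⟩ 1))) ∧
      -- (iii)
      Nonempty (((↥(D.Jset e ι κ α l false) → R) ⧸ radZt l false) ≃ₗ[(↥Asub)ᵐᵒᵖ]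
        ((↥(D.Iset e ι κ α l false) → R) ⧸ radZ l false)) ∧
      -- (iv)
      Nonempty (((↥(D.Jset e ι κ α l true) → R) ⧸ radZt l true) ≃ₗ[(↥Asub)ᵐᵒᵖ]
        ((↥(D.Iset e ι κ α l true) → R) ⧸ radZ l true)) := by
  intro l
  classical
  letI : Module (↥Asub)ᵐᵒᵖ (↥(D.Jset e ι κ α l false) → R) :=
    Module.compHom _ (RingHom.op (Subalgebra.inclusion hle).toRingHom)
  letI : Module (↥Asub)ᵐᵒᵖ (↥(D.Jset e ι κ α l true) → R) :=
    Module.compHom _ (RingHom.op (Subalgebra.inclusion hle).toRingHom)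
  letI : Module (↥Asub)ᵐᵒᵖ ((↥(D.Jset e ι κ α l false) → R) ⧸ radZt l false) :=
    Module.compHom _ (RingHom.op (Subalgebra.inclusion hle).toRingHom)
  letI : Module (↥Asub)ᵐᵒᵖ ((↥(D.Jset e ι κ α l true) → R) ⧸ radZt l true) :=
    Module.compHom _ (RingHom.op (Subalgebra.inclusion hle).toRingHom)
  rcases subsingleton_or_nontrivial R with hR | hR
  · -- trivial case: everything is subsingleton
    haveI hs1 : ∀ (γ : Type u), Subsingleton (γ → R) :=
      fun γ => ⟨fun a b => funext fun i => Subsingleton.elim _ _⟩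
    haveI hq1 : Subsingleton ((↥(D.Jset e ι κ α l false) → R) ⧸ radZt l false) :=
      (Submodule.Quotient.mk_surjective _).subsingleton
    haveI hq2 : Subsingleton ((↥(D.Jset e ι κ α l true) → R) ⧸ radZt l true) :=
      (Submodule.Quotient.mk_surjective _).subsingleton
    haveI hq3 : Subsingleton ((↥(D.Iset e ι κ α l false) → R) ⧸ radZ l false) :=
      (Submodule.Quotient.mk_surjective _).subsingleton
    haveI hq4 : Subsingleton ((↥(D.Iset e ι κ α l true) → R) ⧸ radZ l true) :=
      (Submodule.Quotient.mk_surjective _).subsingleton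
    exact ⟨⟨LinearEquiv.ofSubsingleton _ _, fun t => Subsingleton.elim _ _⟩,
      ⟨LinearEquiv.ofSubsingleton _ _, fun t h => Subsingleton.elim _ _,
        fun t h => Subsingleton.elim _ _⟩,
      ⟨LinearEquiv.ofSubsingleton _ _⟩, ⟨LinearEquiv.ofSubsingleton _ _⟩⟩
  · -- main case
    have hbmem : ∀ b : ↥Asub, (b : A) ∈ D.levi e ι κ α := by
      intro b
      rw [← hAsub]
      exact b.2
    have hcases : ∀ t : T l, t ∈ D.Iset e ι κ α l false ∨ t ∈ D.Iset e ι κ α l true :=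
      fun t => D.pf_mem_plus_or_minus hA hα l t
    have hdisj : ∀ t : T l, t ∈ D.Iset e ι κ α l false → t ∈ D.Iset e ι κ α l true → False :=
      fun t h1 h2 => D.pf_not_plus_minus hA h1 h2
    -- the single image lemmas
    have hsingle : ∀ (ε εJ : Bool) (inc : ↥(D.Iset e ι κ α l ε) → ↥(D.Jset e ι κ α l εJ)),
        (∀ s, (inc s).1 = s.1) → ∀ (t : ↥(D.Jset e ι κ α l εJ)) (h : t.1 ∈ D.Iset e ι κ α l ε),
        LinearMap.funLeft R R inc (Pi.single t 1) =
          Pi.single (⟨t.1, h⟩ : ↥(D.Iset e ι κ α l ε)) 1 := by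
      intro ε εJ inc hinc t h
      funext v
      rw [LinearMap.funLeft_apply, Pi.single_apply, Pi.single_apply]
      by_cases hv : v.1 = t.1
      · rw [if_pos (Subtype.ext ((hinc v).trans hv)), if_pos (Subtype.ext hv)]
      · rw [if_neg (fun hh => hv ((hinc v).symm.trans (congrArg Subtype.val hh))),
          if_neg (fun hh => hv (congrArg Subtype.val hh))]
    have hsingle0 : ∀ (ε εJ : Bool) (inc : ↥(D.Iset e ι κ α l ε) → ↥(D.Jset e ι κ α l εJ)),
        (∀ s, (inc s).1 = s.1) → ∀ (t : ↥(D.Jset e ι κ α l εJ)), t.1 ∉ D.Iset e ι κ α l ε →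
        LinearMap.funLeft R R inc (Pi.single t 1) = 0 := by
      intro ε εJ inc hinc t h
      funext v
      rw [LinearMap.funLeft_apply, Pi.single_apply, if_neg, Pi.zero_apply]
      intro hh
      exact h (by rw [← congrArg Subtype.val hh, hinc]; exact v.2)
    -- the key compatibility of restriction with the two actions
    have hcore : ∀ (ε εJ : Bool) (inc : ↥(D.Iset e ι κ α l ε) → ↥(D.Jset e ι κ α l εJ))
        (hinc : ∀ s, (inc s).1 = s.1) (b : ↥Asub) (x : ↥(D.Jset e ι κ α l εJ) → R),
        LinearMap.funLeft R R inc ((op (Subalgebra.inclusion hle b)) • x) =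
          (op b) • LinearMap.funLeft R R inc x := by
      intro ε εJ inc hinc b x
      have hbase : ∀ t : ↥(D.Jset e ι κ α l εJ),
          LinearMap.funLeft R R inc ((op (Subalgebra.inclusion hle b)) • (Pi.single t 1 : ↥(D.Jset e ι κ α l εJ) → R)) =
            (op b) • LinearMap.funLeft R R inc (Pi.single t 1) := by
        intro t
        by_cases hεt : t.1 ∈ D.Iset e ι κ α l ε
        · rw [hZtact l εJ t (Subalgebra.inclusion hle b), hsingle ε εJ inc hinc t hεt,
            hZact l ε ⟨t.1, hεt⟩ b]
          funext v
          rw [LinearMap.funLeft_apply]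
          show D.coeff l t.1 ((Subalgebra.inclusion hle b : ↥Asubt) : A) (inc v).1 =
            D.coeff l t.1 (b : A) v.1
          rw [hinc, Subalgebra.coe_inclusion]
        · obtain ⟨ε'', h''⟩ : ∃ ε'', t.1 ∈ D.Iset e ι κ α l ε'' :=
            (hcases t.1).elim (fun h => ⟨false, h⟩) (fun h => ⟨true, h⟩)
          have hne'' : ε'' ≠ ε := fun hh => hεt (hh ▸ h'')
          rw [hZtact l εJ t (Subalgebra.inclusion hle b), hsingle0 ε εJ inc hinc t hεt,
            smul_zero]
          funext v
          rw [LinearMap.funLeft_apply, Pi.zero_apply]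
          show D.coeff l t.1 ((Subalgebra.inclusion hle b : ↥Asubt) : A) (inc v).1 = 0
          rw [hinc, Subalgebra.coe_inclusion]
          exact D.pf_coeff_vanish hA hα hne'' h'' v.2 (hbmem b)
      conv_lhs => rw [← pf_pi_decomp x]
      conv_rhs => rw [← pf_pi_decomp x]
      rw [Finset.smul_sum, map_sum, map_sum, Finset.smul_sum]
      refine Finset.sum_congr rfl (fun t _ => ?_)
      calc LinearMap.funLeft R R inc ((op (Subalgebra.inclusion hle b)) •
              (x t • (Pi.single t 1 : ↥(D.Jset e ι κ α l εJ) → R)))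
          = LinearMap.funLeft R R inc (x t • ((op (Subalgebra.inclusion hle b)) •
              (Pi.single t 1 : ↥(D.Jset e ι κ α l εJ) → R))) := by
            rw [hZtsmul]
        _ = x t • LinearMap.funLeft R R inc ((op (Subalgebra.inclusion hle b)) •
              (Pi.single t 1 : ↥(D.Jset e ι κ α l εJ) → R)) := map_smul _ _ _
        _ = x t • ((op b) • LinearMap.funLeft R R inc
              (Pi.single t 1 : ↥(D.Jset e ι κ α l εJ) → R)) := by rw [hbase t]
        _ = (op b) • (x t • LinearMap.funLeft R R inc
              (Pi.single t 1 : ↥(D.Jset e ι κ α l εJ) → R)) := (hZsmul l ε _ _ _).symm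
        _ = (op b) • LinearMap.funLeft R R inc
              (x t • (Pi.single t 1 : ↥(D.Jset e ι κ α l εJ) → R)) := by rw [map_smul]
    -- radical characterizations
    have hradZ' : ∀ (ε : Bool) (z : ↥(D.Iset e ι κ α l ε) → R),
        z ∈ radZ l ε ↔ ∀ u : ↥(D.Iset e ι κ α l ε), ∑ s, z s * φ l s.1 u.1 = 0 := by
      intro ε z
      rw [hradZ]
      constructor
      · intro h u
        have h2 := h (Pi.single u 1)
        simp only [formSum] at h2
        rw [← h2]
        refine Finset.sum_congr rfl fun s _ => ?_
        rw [Finset.sum_eq_single u]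
        · rw [Pi.single_eq_same, mul_one]
        · intro w _ hw
          rw [Pi.single_eq_of_ne hw, mul_zero]
        · intro hc
          exact absurd (Finset.mem_univ u) hc
      · intro h y
        simp only [formSum]
        rw [Finset.sum_comm]
        refine Finset.sum_eq_zero fun u _ => ?_
        calc ∑ s, z s * φ l s.1 u.1 * y u = (∑ s, z s * φ l s.1 u.1) * y u :=
              (Finset.sum_mul _ _ _).symm
          _ = 0 := by rw [h u, zero_mul]
    have hradt0 : ∀ x : ↥(D.Jset e ι κ α l false) → R,
        x ∈ radZt l false ↔ x ∈ radZ l false := by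
      intro x
      rw [hradZt]
      refine Iff.trans ?_ (hradZ' false x).symm
      constructor
      · intro h u
        exact (pf_sum_univ_eq _ _ _).trans (h u)
      · intro h u
        exact (pf_sum_univ_eq _ _ _).trans (h u)
    have hsplit : ∀ (u : ↥(D.Iset e ι κ α l true)) (x : ↥(D.Jset e ι κ α l true) → R),
        ∑ t, x t * φ l t.1 u.1 =
          ∑ s, (LinearMap.funLeft R R (fun s : ↥(D.Iset e ι κ α l true) => (⟨s.1, Set.mem_univ s.1⟩ : ↥(D.Jset e ι κ α l true))) x) s * φ l s.1 u.1 := by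
      intro u x
      have h1 : ∑ t, x t * φ l t.1 u.1 =
          ∑ w : T l, x ⟨w, Set.mem_univ w⟩ * φ l w u.1 :=
        (pf_sum_univ_eq _ Set.fintypeUniv _).trans
          (Fintype.sum_equiv (Equiv.Set.univ (T l)) _ _ (fun t => rfl))
      rw [h1, pf_sum_split inferInstance hcases _ (fun w hw => by
        rw [D.pf_phi_vanish hA hφ (fun hc => Bool.noConfusion hc) hw u.2, mul_zero])]
      rfl
    have hradt1 : ∀ x : ↥(D.Jset e ι κ α l true) → R,
        x ∈ radZt l true ↔ LinearMap.funLeft R R (fun s : ↥(D.Iset e ι κ α l true) => (⟨s.1, Set.mem_univ s.1⟩ : ↥(D.Jset e ι κ α l true))) x ∈ radZ l true := by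
      intro x
      rw [hradZt, hradZ' true]
      constructor
      · intro h u
        rw [← hsplit u x]
        exact h u
      · intro h s
        rw [hsplit s x]
        exact h s
    refine ⟨?_, ?_, ?_, ?_⟩
    · -- (i)
      refine ⟨⟨⟨⟨fun x => x, fun _ _ => rfl⟩, fun a x => ?_⟩, fun x => x,
        fun _ => rfl, fun _ => rfl⟩, fun t => ?_⟩
      · exact hcore false false (fun s : ↥(D.Iset e ι κ α l false) => (⟨s.1, s.2⟩ : ↥(D.Jset e ι κ α l false))) (fun s => rfl) a.unop x
      · exact hsingle false false (fun s : ↥(D.Iset e ι κ α l false) => (⟨s.1, s.2⟩ : ↥(D.Jset e ι κ α l false))) (fun s => rfl) t t.2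
    · -- (ii)
      refine ⟨⟨⟨⟨fun x => (LinearMap.funLeft R R (fun s : ↥(D.Iset e ι κ α l false) => (⟨s.1, Set.mem_univ s.1⟩ : ↥(D.Jset e ι κ α l true))) x, LinearMap.funLeft R R (fun s : ↥(D.Iset e ι κ α l true) => (⟨s.1, Set.mem_univ s.1⟩ : ↥(D.Jset e ι κ α l true))) x),
        fun x y => ?_⟩, fun a x => ?_⟩,
        fun y t => if h : t.1 ∈ D.Iset e ι κ α l false then y.1 ⟨t.1, h⟩
          else y.2 ⟨t.1, (hcases t.1).resolve_left h⟩, fun x => ?_, fun y => ?_⟩,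
        fun t h => ?_, fun t h => ?_⟩
      · rw [map_add, map_add]
        rfl
      · exact congrArg₂ Prod.mk (hcore false true (fun s : ↥(D.Iset e ι κ α l false) => (⟨s.1, Set.mem_univ s.1⟩ : ↥(D.Jset e ι κ α l true))) (fun s => rfl) a.unop x)
          (hcore true true (fun s : ↥(D.Iset e ι κ α l true) => (⟨s.1, Set.mem_univ s.1⟩ : ↥(D.Jset e ι κ α l true))) (fun s => rfl) a.unop x)
      · funext t
        dsimp only
        by_cases h : t.1 ∈ D.Iset e ι κ α l false
        · rw [dif_pos h]
          rfl
        · rw [dif_neg h]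
          rfl
      · refine Prod.ext ?_ ?_
        · funext s
          simp only [LinearMap.funLeft_apply]
          rw [dif_pos s.2]
        · funext s
          simp only [LinearMap.funLeft_apply]
          rw [dif_neg (fun hc => hdisj s.1 hc s.2)]
      · exact congrArg₂ Prod.mk
          (hsingle false true (fun s : ↥(D.Iset e ι κ α l false) => (⟨s.1, Set.mem_univ s.1⟩ : ↥(D.Jset e ι κ α l true))) (fun s => rfl) ⟨t, Set.mem_univ t⟩ h)
          (hsingle0 true true (fun s : ↥(D.Iset e ι κ α l true) => (⟨s.1, Set.mem_univ s.1⟩ : ↥(D.Jset e ι κ α l true))) (fun s => rfl) ⟨t, Set.mem_univ t⟩ (fun hc => hdisj t h hc))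
      · exact congrArg₂ Prod.mk
          (hsingle0 false true (fun s : ↥(D.Iset e ι κ α l false) => (⟨s.1, Set.mem_univ s.1⟩ : ↥(D.Jset e ι κ α l true))) (fun s => rfl) ⟨t, Set.mem_univ t⟩ (fun hc => hdisj t hc h))
          (hsingle true true (fun s : ↥(D.Iset e ι κ α l true) => (⟨s.1, Set.mem_univ s.1⟩ : ↥(D.Jset e ι κ α l true))) (fun s => rfl) ⟨t, Set.mem_univ t⟩ h)
    · -- (iii)
      refine ⟨?_⟩
      refine LinearEquiv.ofBijective ?_ ⟨?_, ?_⟩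
      case _ => exact
        ⟨⟨fun q => Quotient.liftOn' q (fun x =>
            Submodule.Quotient.mk (p := radZ l false) x)
            (fun a b hab => by
              exact (Submodule.Quotient.eq (radZ l false)).2
                ((hradt0 (a - b)).1 ((Submodule.quotientRel_def _).1 hab))),
          fun q1 q2 => by
            obtain ⟨x, rfl⟩ := Submodule.Quotient.mk_surjective _ q1
            obtain ⟨y, rfl⟩ := Submodule.Quotient.mk_surjective _ q2
            rw [← Submodule.Quotient.mk_add]
            show Submodule.Quotient.mk (p := radZ l false) (x + y) =
              Submodule.Quotient.mk (p := radZ l false) x +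
                Submodule.Quotient.mk (p := radZ l false) y
            exact Submodule.Quotient.mk_add _⟩,
          fun a q => by
            obtain ⟨x, rfl⟩ := Submodule.Quotient.mk_surjective _ q
            show Submodule.Quotient.mk (p := radZ l false)
                (((op (Subalgebra.inclusion hle a.unop)) • x :
                  ↥(D.Jset e ι κ α l false) → R)) =
              a • Submodule.Quotient.mk (p := radZ l false) x
            exact (congrArg _ (hcore false false (fun s : ↥(D.Iset e ι κ α l false) =>
              (⟨s.1, s.2⟩ : ↥(D.Jset e ι κ α l false))) (fun s => rfl) a.unop x)).trans
              (Submodule.Quotient.mk_smul _ _ _)⟩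
      · intro q1 q2 hq
        obtain ⟨x, rfl⟩ := Submodule.Quotient.mk_surjective _ q1
        obtain ⟨y, rfl⟩ := Submodule.Quotient.mk_surjective _ q2
        rw [Submodule.Quotient.eq]
        exact (hradt0 (x - y)).2 ((Submodule.Quotient.eq (radZ l false)).1 hq)
      · intro q
        obtain ⟨z, rfl⟩ := Submodule.Quotient.mk_surjective _ q
        exact ⟨Submodule.Quotient.mk (p := radZt l false) z, rfl⟩
    · -- (iv)
      refine ⟨?_⟩
      refine LinearEquiv.ofBijective ?_ ⟨?_, ?_⟩
      case _ => exact
        ⟨⟨fun q => Quotient.liftOn' q (fun x =>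
            Submodule.Quotient.mk (p := radZ l true) (LinearMap.funLeft R R
                (fun s : ↥(D.Iset e ι κ α l true) =>
                  (⟨s.1, Set.mem_univ s.1⟩ : ↥(D.Jset e ι κ α l true))) x))
            (fun a b hab => by
              rw [Submodule.Quotient.eq]
              have h2 := (hradt1 (a - b)).1 ((Submodule.quotientRel_def _).1 hab)
              rw [map_sub] at h2
              exact h2),
          fun q1 q2 => by
            obtain ⟨x, rfl⟩ := Submodule.Quotient.mk_surjective _ q1
            obtain ⟨y, rfl⟩ := Submodule.Quotient.mk_surjective _ q2
            rw [← Submodule.Quotient.mk_add]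
            show Submodule.Quotient.mk (p := radZ l true) (LinearMap.funLeft R R
                (fun s : ↥(D.Iset e ι κ α l true) =>
                  (⟨s.1, Set.mem_univ s.1⟩ : ↥(D.Jset e ι κ α l true))) (x + y)) =
              Submodule.Quotient.mk (p := radZ l true) (LinearMap.funLeft R R
                (fun s : ↥(D.Iset e ι κ α l true) =>
                  (⟨s.1, Set.mem_univ s.1⟩ : ↥(D.Jset e ι κ α l true))) x) +
                Submodule.Quotient.mk (p := radZ l true) (LinearMap.funLeft R R
                  (fun s : ↥(D.Iset e ι κ α l true) =>
                    (⟨s.1, Set.mem_univ s.1⟩ : ↥(D.Jset e ι κ α l true))) y)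
            rw [map_add]
            exact Submodule.Quotient.mk_add _⟩,
          fun a q => by
            obtain ⟨x, rfl⟩ := Submodule.Quotient.mk_surjective _ q
            show Submodule.Quotient.mk (p := radZ l true) (LinearMap.funLeft R R
                (fun s : ↥(D.Iset e ι κ α l true) =>
                  (⟨s.1, Set.mem_univ s.1⟩ : ↥(D.Jset e ι κ α l true)))
                (((op (Subalgebra.inclusion hle a.unop)) • x : ↥(D.Jset e ι κ α l true) → R))) =
              a • Submodule.Quotient.mk (p := radZ l true) (LinearMap.funLeft R R
                (fun s : ↥(D.Iset e ι κ α l true) =>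
                  (⟨s.1, Set.mem_univ s.1⟩ : ↥(D.Jset e ι κ α l true))) x)
            exact (congrArg _ (hcore true true (fun s : ↥(D.Iset e ι κ α l true) =>
              (⟨s.1, Set.mem_univ s.1⟩ : ↥(D.Jset e ι κ α l true))) (fun s => rfl) a.unop x)).trans
              (Submodule.Quotient.mk_smul _ _ _)⟩
      · intro q1 q2 hq
        obtain ⟨x, rfl⟩ := Submodule.Quotient.mk_surjective _ q1
        obtain ⟨y, rfl⟩ := Submodule.Quotient.mk_surjective _ q2
        rw [Submodule.Quotient.eq]
        have h2 := (Submodule.Quotient.eq (radZ l true)).1 hq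
        rw [← map_sub] at h2
        exact (hradt1 (x - y)).2 h2
      · intro q
        obtain ⟨z, rfl⟩ := Submodule.Quotient.mk_surjective _ q
        refine ⟨Submodule.Quotient.mk (p := radZt l true) (fun t : ↥(D.Jset e ι κ α l true) =>
          if h : t.1 ∈ D.Iset e ι κ α l true then z ⟨t.1, h⟩ else 0), ?_⟩
        refine congrArg _ (funext fun s => ?_)
        show (if h : s.1 ∈ D.Iset e ι κ α l true then z ⟨s.1, h⟩ else 0) = z s
        rw [dif_pos s.2]
end
end

section
/- For λ ∈ Λ⁺, regarding A-modules as Ã^α-modules by restriction: (i) there is an injective Ã^α-homomorphism Z̃^{(λ,0)} → W^λ sending c̃^{(λ,0)}_t ↦ c^λ_t for t ∈ T⁺_α(λ); (ii) there is an Ã^α-isomorphism Z̃^{(λ,1)} ≅ W^λ sending c̃^{(λ,1)}_t ↦ c^λ_t for t ∈ T(λ); (iii) L^λ contains L̃^{(λ,0)} as an Ã^α-submodule; (iv) L^λ/L̃^{(λ,0)} ≅ L̃^{(λ,1)} as Ã^α-modules. -/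
open MulOpposite

noncomputable section

universe u

section Aux

variable {R A : Type u} [CommRing R] [Ring A] [Algebra R A]
variable {Λp : Type u} [PartialOrder Λp] {T : Λp → Type u} [∀ l, Fintype (T l)]
variable (D : CellDatum R A Λp T)

lemma aux_repr_zero {S : Set ((l : Λp) × (T l × T l))} {x : A}
    (hx : x ∈ Submodule.span R (⇑D.basis '' S)) {i : (l : Λp) × (T l × T l)} (hi : i ∉ S) :
    D.basis.repr x i = 0 := by
  have h := (Module.Basis.mem_span_image (b := D.basis)).1 hx
  by_contra hne
  exact hi (h (Finsupp.mem_support_iff.2 hne))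

lemma aux_Aup_eq (l : Λp) :
    D.Aup l = Submodule.span R (⇑D.basis '' {i | l < i.1}) := by
  unfold CellDatum.Aup
  congr 1
  ext x
  constructor
  · rintro ⟨l', s', t', hl, rfl⟩
    exact ⟨⟨l', (s', t')⟩, hl, D.basis_eq l' s' t'⟩
  · rintro ⟨⟨l', s', t'⟩, hl, rfl⟩
    exact ⟨l', s', t', hl, D.basis_eq l' s' t'⟩

lemma aux_repr_Aup {l : Λp} {x : A} (hx : x ∈ D.Aup l)
    {i : (l : Λp) × (T l × T l)} (hi : ¬ l < i.1) : D.basis.repr x i = 0 := by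
  rw [aux_Aup_eq] at hx
  exact aux_repr_zero D hx hi

lemma aux_idx_eq_iff (l : Λp) (s w v : T l) :
    (⟨l, (s, w)⟩ : (l : Λp) × (T l × T l)) = ⟨l, (s, v)⟩ ↔ w = v := by
  simp [Sigma.ext_iff, Prod.ext_iff]

lemma aux_coeff_eq (l : Λp) (s t : T l) (a : A) (v : T l) :
    D.coeff l t a v = D.basis.repr (D.c l s t * a) ⟨l, (s, v)⟩ := by
  classical
  have h := D.mul_rule l s t a
  have h0 : D.basis.repr (D.c l s t * a - ∑ w, D.coeff l t a w • D.c l s w) ⟨l, (s, v)⟩ = 0 :=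
    aux_repr_Aup D h (lt_irrefl l)
  rw [map_sub, Finsupp.sub_apply, sub_eq_zero, map_sum, Finset.sum_apply'] at h0
  have hterm : ∀ w, (D.basis.repr (D.coeff l t a w • D.c l s w)) ⟨l, (s, v)⟩
      = D.coeff l t a w * (if w = v then 1 else 0) := by
    intro w
    rw [map_smul, Finsupp.smul_apply, ← D.basis_eq l s w, D.basis.repr_self,
      Finsupp.single_apply, smul_eq_mul]
    congr 1
    simp [aux_idx_eq_iff]
  rw [Finset.sum_congr rfl (fun w _ => hterm w)] at h0
  simp only [mul_ite, mul_one, mul_zero, Finset.sum_ite_eq', Finset.mem_univ, if_true] at h0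
  exact h0.symm ▸ rfl

lemma aux_coeff_zero (l : Λp) (t : T l) (v : T l) : D.coeff l t (0 : A) v = 0 := by
  rw [aux_coeff_eq D l t t 0 v, mul_zero, map_zero]; rfl

lemma aux_coeff_add (l : Λp) (t : T l) (a b : A) (v : T l) :
    D.coeff l t (a + b) v = D.coeff l t a v + D.coeff l t b v := by
  rw [aux_coeff_eq D l t t a v, aux_coeff_eq D l t t b v, aux_coeff_eq D l t t (a + b) v,
    mul_add, map_add, Finsupp.add_apply]

lemma aux_coeff_smul (l : Λp) (t : T l) (r : R) (a : A) (v : T l) :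
    D.coeff l t (r • a) v = r * D.coeff l t a v := by
  rw [aux_coeff_eq D l t t a v, aux_coeff_eq D l t t (r • a) v, mul_smul_comm, map_smul,
    Finsupp.smul_apply, smul_eq_mul]

lemma aux_Aup_mul {l : Λp} {x : A} (hx : x ∈ D.Aup l) (a : A) : x * a ∈ D.Aup l := by
  induction hx using Submodule.span_induction with
  | mem y hy =>
    obtain ⟨l', s', t', hl, rfl⟩ := hy
    have h := D.mul_rule l' s' t' a
    have hrw : D.c l' s' t' * a =
        (D.c l' s' t' * a - ∑ w, D.coeff l' t' a w • D.c l' s' w) +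
          ∑ w, D.coeff l' t' a w • D.c l' s' w := (by abel)
    rw [hrw]
    refine Submodule.add_mem _ ?_ ?_
    · refine Submodule.span_mono ?_ h
      rintro y ⟨l2, s2, t2, h2, rfl⟩
      exact ⟨l2, s2, t2, hl.trans h2, rfl⟩
    · exact Submodule.sum_mem _ fun w _ =>
        Submodule.smul_mem _ _ (Submodule.subset_span ⟨l', s', w, hl, rfl⟩)
  | zero => rw [zero_mul]; exact Submodule.zero_mem _
  | add y z hy hz ihy ihz => rw [add_mul]; exact Submodule.add_mem _ ihy ihz
  | smul r y hy ih => rw [smul_mul_assoc]; exact Submodule.smul_mem _ _ ih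

lemma aux_above_c {P : Λp → Prop} {m : Λp} (hm : P m) (s t : T m) :
    D.c m s t ∈ Submodule.span R (⇑D.basis '' {i | P i.1}) :=
  Submodule.subset_span ⟨⟨m, (s, t)⟩, hm, D.basis_eq m s t⟩

lemma aux_above_mul {P : Λp → Prop} (hP : ∀ {m m'}, P m → m ≤ m' → P m') {x : A}
    (hx : x ∈ Submodule.span R (⇑D.basis '' {i | P i.1})) (a : A) :
    x * a ∈ Submodule.span R (⇑D.basis '' {i | P i.1}) := by
  induction hx using Submodule.span_induction with
  | mem y hy =>
    obtain ⟨⟨m, s, t⟩, hm, rfl⟩ := hy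
    rw [D.basis_eq m s t]
    have h := D.mul_rule m s t a
    have hrw : D.c m s t * a =
        (D.c m s t * a - ∑ w, D.coeff m t a w • D.c m s w) +
          ∑ w, D.coeff m t a w • D.c m s w := (by abel)
    rw [hrw]
    refine Submodule.add_mem _ ?_ ?_
    · refine Submodule.span_le.2 ?_ h
      rintro y ⟨l2, s2, t2, h2, rfl⟩
      exact aux_above_c D (hP hm h2.le) s2 t2
    · exact Submodule.sum_mem _ fun w _ =>
        Submodule.smul_mem _ _ (aux_above_c D hm s w)
  | zero => rw [zero_mul]; exact Submodule.zero_mem _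
  | add y z hy hz ihy ihz => rw [add_mul]; exact Submodule.add_mem _ ihy ihz
  | smul r y hy ih => rw [smul_mul_assoc]; exact Submodule.smul_mem _ _ ih

lemma aux_above_star {P : Λp → Prop} {x : A}
    (hx : x ∈ Submodule.span R (⇑D.basis '' {i | P i.1})) :
    D.star x ∈ Submodule.span R (⇑D.basis '' {i | P i.1}) := by
  induction hx using Submodule.span_induction with
  | mem y hy =>
    obtain ⟨⟨m, s, t⟩, hm, rfl⟩ := hy
    rw [D.basis_eq m s t, D.star_c]
    exact aux_above_c D hm t s
  | zero => rw [map_zero]; exact Submodule.zero_mem _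
  | add y z hy hz ihy ihz => rw [map_add]; exact Submodule.add_mem _ ihy ihz
  | smul r y hy ih => rw [map_smul]; exact Submodule.smul_mem _ _ ih

end Aux

section Aux2

variable {R A : Type u} [CommRing R] [Ring A] [Algebra R A]
variable {Λp : Type u} [PartialOrder Λp] {T : Λp → Type u} [∀ l, Fintype (T l)]
variable {Λt M X : Type u} [PartialOrder Λt] [PartialOrder X] [Fintype M]
variable (D : CellDatum R A Λp T)
variable {ι : Λp → Λt} {κ : M → Λt} {e : M → A}

lemma aux_kappa_le [Nontrivial R] (hA : D.IdemData ι κ e) (l : Λp) (μ : M) (v : T l)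
    (hv : ∀ u, e μ * D.c l v u = D.c l v u) : κ μ ≤ ι l := by
  set P : Λp → Prop := fun m => κ μ ≤ ι m with hPdef
  have hP : ∀ {m m'}, P m → m ≤ m' → P m' := fun h hle => h.trans ((hA.order_iff _ _).2 hle)
  have he : e μ ∈ Submodule.span R (⇑D.basis '' {i | P i.1}) := by
    refine Submodule.span_le.2 ?_ (hA.mem_span μ)
    rintro y ⟨m, s, t, hm, rfl⟩
    exact aux_above_c D hm s t
  have h2 := aux_above_mul D hP he (D.c l v v)
  rw [hv v] at h2
  by_contra hPl
  have h3 := aux_repr_zero D h2 (i := ⟨l, (v, v)⟩) hPl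
  rw [← D.basis_eq l v v, D.basis.repr_self, Finsupp.single_eq_same] at h3
  exact one_ne_zero h3

lemma aux_TpTm [Nontrivial R] (hA : D.IdemData ι κ e) {α : Λt → X} (hα : Monotone α)
    (l : Λp) (v : T l) :
    v ∈ D.Tplus e ι κ α l ∨ v ∈ D.Tminus e ι κ α l := by
  obtain ⟨μ, h1, h2⟩ := hA.exists_idem l v
  have hv : v ∈ D.Tset e l μ := ⟨h1, h2⟩
  have hle : α (κ μ) ≤ α (ι l) := hα (aux_kappa_le D hA l μ v h2)
  rcases hle.lt_or_eq with h | h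
  · exact Or.inr ⟨μ, hv, h⟩
  · exact Or.inl ⟨μ, hv, h.symm⟩

lemma aux_prod_zero (hA : D.IdemData ι κ e) {l m : Λp} {t s' : T l} {u : T m} {t' : T m}
    {μ ν : M} (hμ : D.c l s' t * e μ = D.c l s' t) (hν : e ν * D.c m u t' = D.c m u t')
    (hμν : μ ≠ ν) : D.c l s' t * D.c m u t' = 0 := by
  rw [← hμ, ← hν, mul_assoc, ← mul_assoc (e μ), hA.orth μ ν hμν, zero_mul, mul_zero]

lemma aux_claimA (hA : D.IdemData ι κ e) {α : Λt → X} (hα : Monotone α)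
    (l : Λp) (t v : T l) (ht : t ∈ D.Tplus e ι κ α l) (hv : v ∉ D.Tplus e ι κ α l)
    {a : A} (ha : a ∈ D.parab e ι κ α) : D.coeff l t a v = 0 := by
  classical
  obtain ⟨μ, htμ, hμ⟩ := ht
  induction ha using Submodule.span_induction with
  | zero => exact aux_coeff_zero D l t v
  | add y z hy hz ihy ihz => rw [aux_coeff_add D l t y z v, ihy, ihz, add_zero]
  | smul r y hy ih => rw [aux_coeff_smul D l t r y v, ih, mul_zero]
  | mem y hy =>
    obtain ⟨m, ε, s', t', hs', ht', rfl⟩ := hy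
    have hzero : D.c l t t * D.c m s' t' = 0 → D.coeff l t (D.c m s' t') v = 0 := fun h0 => by
      rw [aux_coeff_eq D l t t _ v, h0, map_zero]; rfl
    cases ε with
    | true =>
      obtain ⟨ν, hsν, hν⟩ := hs'
      by_cases hμν : μ = ν
      · subst hμν
        have hml : ¬ m ≤ l := by
          intro hle
          have hlt : α (ι l) < α (ι m) := by rw [hμ]; exact hν
          exact absurd (hα ((hA.order_iff m l).2 hle)) hlt.not_ge
        have hP : ∀ {m1 m2 : Λp}, m ≤ m1 → m1 ≤ m2 → m ≤ m2 := fun h1 h2 => h1.trans h2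
        have h1 : D.c m t' s' * D.c l t t ∈
            Submodule.span R (⇑D.basis '' {i | m ≤ i.1}) :=
          aux_above_mul D hP (aux_above_c D le_rfl t' s') _
        have h2 := aux_above_star D h1
        rw [D.star_mul, D.star_c, D.star_c] at h2
        rw [aux_coeff_eq D l t t _ v]
        exact aux_repr_zero D h2 (i := ⟨l, (t, v)⟩) hml
      · exact hzero (aux_prod_zero D hA (htμ.1 t) (hsν.2 t') hμν)
    | false =>
      obtain ⟨ν, hsν, hν⟩ := hs'
      by_cases hμν : μ = ν
      · subst hμν
        obtain ⟨σ, htσ, hσ⟩ := ht'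
        have hlσ : α (ι l) = α (κ σ) := by rw [hμ, ← hν, hσ]
        set a := D.c m s' t' with hadef
        set x := D.c l t t * a with hxdef
        have hxσ : x * e σ = x := by rw [hxdef, mul_assoc, htσ.1 s']
        have hmr := D.mul_rule l t t a
        have hsum : (∑ w, D.coeff l t a w • D.c l t w) * e σ
            = ∑ w, D.coeff l t a w • (D.c l t w * e σ) := by
          rw [Finset.sum_mul]
          exact Finset.sum_congr rfl fun w _ => smul_mul_assoc _ _ _
        have key : x = (x - ∑ w, D.coeff l t a w • D.c l t w) * e σ
            + ∑ w, D.coeff l t a w • (D.c l t w * e σ) := by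
          rw [← hsum, ← add_mul, sub_add_cancel, hxσ]
        have hterm : ∀ w : T l,
            D.coeff l t a w * (D.basis.repr (D.c l t w * e σ)) ⟨l, (t, v)⟩ = 0 := by
          intro w
          obtain ⟨ρ, hρ1, hρ2⟩ := hA.exists_idem l w
          by_cases hρσ : ρ = σ
          · subst hρσ
            have hwp : w ∈ D.Tplus e ι κ α l := ⟨ρ, ⟨hρ1, hρ2⟩, hlσ⟩
            have hwv : w ≠ v := fun h => hv (h ▸ hwp)
            rw [hρ1 t, ← D.basis_eq l t w, D.basis.repr_self, Finsupp.single_apply,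
              if_neg (by rw [aux_idx_eq_iff]; exact hwv), mul_zero]
          · rw [← hρ1 t, mul_assoc, hA.orth ρ σ hρσ, mul_zero, map_zero]
            simp
        have hfinal : D.basis.repr x ⟨l, (t, v)⟩ = 0 := by
          rw [key, map_add, Finsupp.add_apply, map_sum, Finset.sum_apply']
          have h1 : D.basis.repr ((x - ∑ w, D.coeff l t a w • D.c l t w) * e σ)
              ⟨l, (t, v)⟩ = 0 :=
            aux_repr_Aup D (aux_Aup_mul D hmr (e σ)) (lt_irrefl l)
          rw [h1, zero_add]
          refine Finset.sum_eq_zero fun w _ => ?_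
          rw [map_smul, Finsupp.smul_apply, smul_eq_mul]
          exact hterm w
        rw [aux_coeff_eq D l t t a v]
        exact hfinal
      · exact hzero (aux_prod_zero D hA (htμ.1 t) (hsν.2 t') hμν)

lemma aux_phi_zero (hA : D.IdemData ι κ e) {φ : ∀ l, T l → T l → R}
    (hφ : D.FormData φ) {l : Λp} {s t : T l} {μ ν : M}
    (hsμ : ∀ u, D.c l u s * e μ = D.c l u s) (htν : ∀ u, e ν * D.c l t u = D.c l t u)
    (hμν : μ ≠ ν) : φ l s t = 0 := by
  have h := hφ l s t s t
  have hprod : D.c l s s * D.c l t t = 0 := aux_prod_zero D hA (hsμ s) (htν t) hμν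
  rw [hprod, zero_sub, neg_mem_iff] at h
  have h2 := aux_repr_Aup D h (i := ⟨l, (s, t)⟩) (lt_irrefl l)
  rw [map_smul, Finsupp.smul_apply, ← D.basis_eq l s t, D.basis.repr_self,
    Finsupp.single_eq_same, smul_eq_mul, mul_one] at h2
  exact h2

lemma aux_claimB (hA : D.IdemData ι κ e) {α : Λt → X} {φ : ∀ l, T l → T l → R}
    (hφ : D.FormData φ) {l : Λp} {s t : T l}
    (hs : s ∈ D.Tplus e ι κ α l) (ht : t ∈ D.Tminus e ι κ α l) : φ l s t = 0 := by
  obtain ⟨μ, hsμ, hμ⟩ := hs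
  obtain ⟨ν, htν, hν⟩ := ht
  exact aux_phi_zero D hA hφ hsμ.1 htν.2 (fun h => absurd (hμ ▸ h ▸ hν) (lt_irrefl _))

lemma aux_claimB' (hA : D.IdemData ι κ e) {α : Λt → X} {φ : ∀ l, T l → T l → R}
    (hφ : D.FormData φ) {l : Λp} {s t : T l}
    (hs : s ∈ D.Tminus e ι κ α l) (ht : t ∈ D.Tplus e ι κ α l) : φ l s t = 0 := by
  obtain ⟨μ, hsμ, hμ⟩ := hs
  obtain ⟨ν, htν, hν⟩ := ht
  exact aux_phi_zero D hA hφ hsμ.1 htν.2 (fun h => absurd (hν ▸ h ▸ hμ) (lt_irrefl _))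

end Aux2

section AuxSum

variable {R : Type u} [CommRing R] {β : Type u} [Fintype β]

lemma aux_sum_dite {s : Set β} [Fintype s] [DecidablePred (· ∈ s)]
    (x : s → R) (g : β → R) :
    ∑ u : β, (if h : u ∈ s then x ⟨u, h⟩ else 0) * g u = ∑ t : s, x t * g t.1 := by
  classical
  rw [← Finset.sum_filter_add_sum_filter_not Finset.univ (· ∈ s)]
  have h2 : ∑ u ∈ Finset.univ.filter (fun u => ¬ u ∈ s),
      (if h : u ∈ s then x ⟨u, h⟩ else 0) * g u = 0 := by
    refine Finset.sum_eq_zero fun u hu => ?_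
    rw [dif_neg (Finset.mem_filter.1 hu).2, zero_mul]
  rw [h2, add_zero]
  rw [Finset.sum_subtype (p := (· ∈ s)) (Finset.univ.filter (· ∈ s)) (by simp)
    (fun u => (if h : u ∈ s then x ⟨u, h⟩ else 0) * g u)]
  exact Finset.sum_congr rfl fun t _ => by rw [dif_pos t.2]

lemma aux_sum_univ [Fintype (Set.univ : Set β)] (g : β → R) :
    ∑ t : (Set.univ : Set β), g t.1 = ∑ u : β, g u :=
  Fintype.sum_equiv (Equiv.Set.univ β) _ _ (fun _ => rfl)

end AuxSum

set_option maxHeartbeats 2000000 in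
/-- regarding `A`-modules as `Ã^α`-modules by restriction:
(i) there is an injective `Ã^α`-homomorphism `Z̃^{(λ,0)} → W^λ`, `c̃^{(λ,0)}_t ↦ c^λ_t`;
(ii) there is an `Ã^α`-isomorphism `Z̃^{(λ,1)} ≅ W^λ`, `c̃^{(λ,1)}_t ↦ c^λ_t`;
(iii) `L^λ` contains `L̃^{(λ,0)}` as an `Ã^α`-submodule;
(iv) `L^λ / L̃^{(λ,0)} ≅ L̃^{(λ,1)}` as `Ã^α`-modules. -/
theorem stmt_16
    {R A : Type u} [CommRing R] [Ring A] [Algebra R A]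
    {Λp : Type u} [PartialOrder Λp] [Fintype Λp]
    {T : Λp → Type u} [∀ l, Fintype (T l)] [∀ l, DecidableEq (T l)]
    {Λt M X : Type u} [PartialOrder Λt] [PartialOrder X] [Fintype M]
    (D : CellDatum R A Λp T)
    (ι : Λp → Λt) (κ : M → Λt) (e : M → A)
    (hA : D.IdemData ι κ e)
    (α : Λt → X) (hα : Monotone α)
    (φ : ∀ l, T l → T l → R) (hφ : D.FormData φ)
    -- standard module data for `A`
    [∀ l, Module Aᵐᵒᵖ (T l → R)] (hRStd : D.RightStd)
    (radW : ∀ l, Submodule Aᵐᵒᵖ (T l → R))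
    (hradW : ∀ (l) (x : T l → R), x ∈ radW l ↔ ∀ y, formSum (φ l) x y = 0)
    -- the parabolic type subalgebra `Ã^α` and its right standard module data
    (Asubt : Subalgebra R A) (hAsubt : Asubt.toSubmodule = D.parab e ι κ α)
    [∀ (l : Λp) (ε : Bool), Fintype ↥(D.Jset e ι κ α l ε)]
    [∀ (l : Λp) (ε : Bool), Module (↥Asubt)ᵐᵒᵖ (↥(D.Jset e ι κ α l ε) → R)]
    (hZtsmul : ∀ (l : Λp) (ε : Bool) (r : R) (a : (↥Asubt)ᵐᵒᵖ)
      (x : ↥(D.Jset e ι κ α l ε) → R), a • (r • x) = r • (a • x))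
    (hZtact : ∀ (l : Λp) (ε : Bool) (t : ↥(D.Jset e ι κ α l ε)) (a : Asubt),
      (op a) • (Pi.single t 1 : ↥(D.Jset e ι κ α l ε) → R) =
        fun v => D.coeff l t.1 a.1 v.1)
    (radZt : ∀ (l : Λp) (ε : Bool), Submodule (↥Asubt)ᵐᵒᵖ (↥(D.Jset e ι κ α l ε) → R))
    (hradZt : ∀ (l : Λp) (ε : Bool) (x : ↥(D.Jset e ι κ α l ε) → R),
      x ∈ radZt l ε ↔ ∀ s : ↥(D.Iset e ι κ α l ε),
        ∑ t, x t * φ l t.1 s.1 = 0) :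
    ∀ l : Λp,
      letI : Module (↥Asubt)ᵐᵒᵖ (T l → R) :=
        Module.compHom _ (RingHom.op Asubt.val.toRingHom)
      letI : Module (↥Asubt)ᵐᵒᵖ ((T l → R) ⧸ radW l) :=
        Module.compHom _ (RingHom.op Asubt.val.toRingHom)
      -- (i)
      (∃ F : (↥(D.Jset e ι κ α l false) → R) →ₗ[(↥Asubt)ᵐᵒᵖ] (T l → R),
        Function.Injective F ∧
        ∀ t : ↥(D.Jset e ι κ α l false), F (Pi.single t 1) = Pi.single t.1 1) ∧
      -- (ii)
      (∃ G : (↥(D.Jset e ι κ α l true) → R) ≃ₗ[(↥Asubt)ᵐᵒᵖ] (T l → R),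
        ∀ t : ↥(D.Jset e ι κ α l true), G (Pi.single t 1) = Pi.single t.1 1) ∧
      -- (iii) and (iv)
      (∃ (f : ((↥(D.Jset e ι κ α l false) → R) ⧸ radZt l false) →ₗ[(↥Asubt)ᵐᵒᵖ]
            ((T l → R) ⧸ radW l))
          (g : ((T l → R) ⧸ radW l) →ₗ[(↥Asubt)ᵐᵒᵖ]
            ((↥(D.Jset e ι κ α l true) → R) ⧸ radZt l true)),
        Function.Injective f ∧ Function.Surjective g ∧
        LinearMap.range f = LinearMap.ker g) := by
  intro l
  letI instW : Module (↥Asubt)ᵐᵒᵖ (T l → R) :=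
    Module.compHom _ (RingHom.op Asubt.val.toRingHom)
  letI instWbar : Module (↥Asubt)ᵐᵒᵖ ((T l → R) ⧸ radW l) :=
    Module.compHom _ (RingHom.op Asubt.val.toRingHom)
  classical
  -- basic conversions
  have hJfTp : D.Jset e ι κ α l false = D.Tplus e ι κ α l := rfl
  have hJtU : D.Jset e ι κ α l true = (Set.univ : Set (T l)) := rfl
  -- membership of elements of Asubt in the parabolic subalgebra
  have hpar : ∀ b : Asubt, (b : A) ∈ D.parab e ι κ α := fun b => by
    rw [← hAsubt]; exact b.2
  -- action formula on W
  have actW : ∀ (a : A) (x : T l → R) (v : T l),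
      ((op a) • x) v = ∑ u, x u * D.coeff l u a v := by
    intro a x v
    have hx : x = ∑ u, x u • (Pi.single u (1 : R) : T l → R) := by
      funext w
      rw [Finset.sum_apply]
      simp [Pi.single_apply]
    conv_lhs => rw [hx, Finset.smul_sum]
    rw [Finset.sum_apply]
    refine Finset.sum_congr rfl fun u _ => ?_
    rw [hRStd.1 l (x u) (op a) (Pi.single u 1), hRStd.2 l u a]
    simp
  -- action formula on the standard modules of the parabolic subalgebra
  have actZ : ∀ (ε : Bool) (a : Asubt) (x : ↥(D.Jset e ι κ α l ε) → R)
      (v : ↥(D.Jset e ι κ α l ε)),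
      ((op a) • x) v = ∑ u, x u * D.coeff l u.1 a.1 v.1 := by
    intro ε a x v
    have hx : x = ∑ u, x u • (Pi.single u (1 : R) : ↥(D.Jset e ι κ α l ε) → R) := by
      funext w
      rw [Finset.sum_apply]
      simp [Pi.single_apply]
    conv_lhs => rw [hx, Finset.smul_sum]
    rw [Finset.sum_apply]
    refine Finset.sum_congr rfl fun u _ => ?_
    rw [hZtsmul l ε (x u) (op a) (Pi.single u 1), hZtact l ε u a]
    simp
  -- pointwise characterization of radW
  have hradW1 : ∀ x : T l → R, x ∈ radW l → ∀ u, ∑ s, x s * φ l s u = 0 := by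
    intro x hx u
    have h := (hradW l x).1 hx (Pi.single u 1)
    unfold formSum at h
    rw [Finset.sum_comm] at h
    rw [Finset.sum_eq_single u (fun b _ hb => by simp [Pi.single_apply, hb])
      (fun hu => absurd (Finset.mem_univ u) hu)] at h
    simpa [Pi.single_apply] using h
  have hradW2 : ∀ x : T l → R, (∀ u, ∑ s, x s * φ l s u = 0) → x ∈ radW l := by
    intro x hx
    rw [hradW]
    intro y
    unfold formSum
    rw [Finset.sum_comm]
    refine Finset.sum_eq_zero fun u _ => ?_
    have : ∑ s, x s * φ l s u * y u = (∑ s, x s * φ l s u) * y u := by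
      rw [Finset.sum_mul]
    rw [this, hx u, zero_mul]
  rcases subsingleton_or_nontrivial R with hR | hR
  · -- trivial coefficient ring: everything is subsingleton
    haveI : Subsingleton (T l → R) := ⟨fun a b => funext fun _ => Subsingleton.elim _ _⟩
    haveI : Subsingleton (↥(D.Jset e ι κ α l false) → R) :=
      ⟨fun a b => funext fun _ => Subsingleton.elim _ _⟩
    haveI : Subsingleton (↥(D.Jset e ι κ α l true) → R) :=
      ⟨fun a b => funext fun _ => Subsingleton.elim _ _⟩
    haveI hsW : Subsingleton ((T l → R) ⧸ radW l) :=
      (Submodule.Quotient.mk_surjective (radW l)).subsingleton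
    haveI hsZf : Subsingleton ((↥(D.Jset e ι κ α l false) → R) ⧸ radZt l false) :=
      (Submodule.Quotient.mk_surjective (radZt l false)).subsingleton
    haveI hsZt : Subsingleton ((↥(D.Jset e ι κ α l true) → R) ⧸ radZt l true) :=
      (Submodule.Quotient.mk_surjective (radZt l true)).subsingleton
    refine ⟨⟨0, fun a b _ => Subsingleton.elim a b, fun t => Subsingleton.elim _ _⟩,
      ⟨{ toFun := fun _ => 0, invFun := fun _ => 0,
         map_add' := fun _ _ => Subsingleton.elim _ _,
         map_smul' := fun _ _ => Subsingleton.elim _ _,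
         left_inv := fun _ => Subsingleton.elim _ _,
         right_inv := fun _ => Subsingleton.elim _ _ }, fun t => Subsingleton.elim _ _⟩,
      0, 0, fun a b _ => Subsingleton.elim a b, fun q => ⟨0, Subsingleton.elim _ _⟩, ?_⟩
    ext q
    constructor
    · intro _
      rw [LinearMap.mem_ker]
      exact Subsingleton.elim _ _
    · intro _
      exact ⟨0, Subsingleton.elim _ _⟩
  · -- nontrivial coefficient ring
    have hZact : ∀ (ε : Bool) (b : (↥Asubt)ᵐᵒᵖ) (x : ↥(D.Jset e ι κ α l ε) → R)
        (v : ↥(D.Jset e ι κ α l ε)),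
        (b • x) v = ∑ u, x u * D.coeff l u.1 (b.unop : A) v.1 := fun ε b x v =>
      actZ ε b.unop x v
    -- `F`, the inclusion of Z̃^{(λ,0)} into W^λ
    set F0 : (↥(D.Jset e ι κ α l false) → R) → (T l → R) :=
      fun x v => if h : v ∈ D.Jset e ι κ α l false then x ⟨v, h⟩ else 0 with hF0
    have hF0act : ∀ (b : (↥Asubt)ᵐᵒᵖ) (x : ↥(D.Jset e ι κ α l false) → R) (v : T l),
        (b • F0 x) v = ∑ t : ↥(D.Jset e ι κ α l false),
          x t * D.coeff l t.1 (b.unop : A) v := by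
      intro b x v
      have h1 : (b • F0 x) v = ∑ u, F0 x u * D.coeff l u (b.unop : A) v :=
        actW (b.unop : A) (F0 x) v
      rw [h1]
      simp only [hF0]
      exact aux_sum_dite x _
    set Flin : (↥(D.Jset e ι κ α l false) → R) →ₗ[(↥Asubt)ᵐᵒᵖ] (T l → R) :=
      { toFun := F0,
        map_add' := fun x y => by
          funext v
          simp only [hF0]
          by_cases hv : v ∈ D.Jset e ι κ α l false <;> simp [hv]
        map_smul' := fun b x => by
          funext v
          rw [RingHom.id_apply, hF0act b x v]
          show (if h : v ∈ D.Jset e ι κ α l false then (b • x) ⟨v, h⟩ else 0) = _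
          by_cases hv : v ∈ D.Jset e ι κ α l false
          · rw [dif_pos hv, hZact false b x ⟨v, hv⟩]
          · rw [dif_neg hv]
            refine (Finset.sum_eq_zero fun t _ => ?_).symm
            rw [aux_claimA D hA hα l t.1 v t.2 (fun h => hv h) (hpar b.unop), mul_zero] }
      with hFlin
    have Fapply : ∀ (x : ↥(D.Jset e ι κ α l false) → R) (v : T l),
        Flin x v = if h : v ∈ D.Jset e ι κ α l false then x ⟨v, h⟩ else 0 :=
      fun _ _ => rfl
    have Finj : Function.Injective Flin := by
      intro x y hxy
      funext t
      have h := congrFun hxy t.1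
      rw [Fapply, Fapply, dif_pos t.2, dif_pos t.2] at h
      exact h
    have Fsingle : ∀ t : ↥(D.Jset e ι κ α l false),
        Flin (Pi.single t 1) = Pi.single t.1 1 := by
      intro t
      funext v
      rw [Fapply]
      by_cases hv : v ∈ D.Jset e ι κ α l false
      · rw [dif_pos hv, Pi.single_apply, Pi.single_apply]
        congr 1
        simp [Subtype.ext_iff]
      · rw [dif_neg hv, Pi.single_apply, if_neg (fun h => hv (by rw [h]; exact t.2))]
    -- `G`, the isomorphism Z̃^{(λ,1)} ≅ W^λ
    set G0 : (↥(D.Jset e ι κ α l true) → R) → (T l → R) :=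
      fun x v => x ⟨v, trivial⟩ with hG0
    have hG0act : ∀ (b : (↥Asubt)ᵐᵒᵖ) (x : ↥(D.Jset e ι κ α l true) → R) (v : T l),
        (b • G0 x) v = ∑ u : T l, x ⟨u, trivial⟩ * D.coeff l u (b.unop : A) v :=
      fun b x v => actW (b.unop : A) (G0 x) v
    set Glin : (↥(D.Jset e ι κ α l true) → R) ≃ₗ[(↥Asubt)ᵐᵒᵖ] (T l → R) :=
      { toFun := G0,
        invFun := fun y t => y t.1,
        map_add' := fun x y => rfl,
        map_smul' := fun b x => by
          funext v
          rw [RingHom.id_apply, hG0act b x v]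
          show (b • x) ⟨v, trivial⟩ = _
          rw [hZact true b x ⟨v, trivial⟩]
          exact Fintype.sum_equiv
            (⟨fun t => t.1, fun u => ⟨u, trivial⟩, fun t => rfl, fun u => rfl⟩ :
              ↥(D.Jset e ι κ α l true) ≃ T l) _ _ (fun t => rfl)
        left_inv := fun x => funext fun t => rfl,
        right_inv := fun y => rfl } with hGlin
    have Gapply : ∀ (x : ↥(D.Jset e ι κ α l true) → R) (v : T l),
        Glin x v = x ⟨v, trivial⟩ := fun _ _ => rfl
    have Gsingle : ∀ t : ↥(D.Jset e ι κ α l true),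
        Glin (Pi.single t 1) = Pi.single t.1 1 := by
      intro t
      funext v
      rw [Gapply, Pi.single_apply, Pi.single_apply]
      congr 1
      simp [Subtype.ext_iff]
    refine ⟨⟨Flin, Finj, Fsingle⟩, ⟨Glin, Gsingle⟩, ?_⟩
    -- Part (iii)/(iv): the maps between the simple heads
    have mkW_smul : ∀ (b : (↥Asubt)ᵐᵒᵖ) (x : T l → R),
        (Submodule.Quotient.mk (p := radW l) (b • x))
          = b • (Submodule.Quotient.mk (p := radW l) x) :=
      fun b x => Submodule.Quotient.mk_smul (radW l) (op ((b.unop : Asubt) : A)) x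
    set mkW : (T l → R) →ₗ[(↥Asubt)ᵐᵒᵖ] ((T l → R) ⧸ radW l) :=
      { toFun := Submodule.Quotient.mk,
        map_add' := fun x y => by rw [Submodule.Quotient.mk_add],
        map_smul' := fun b x => mkW_smul b x } with hmkW
    have hsumU : ∀ gg : T l → R,
        (∑ t : ↥(D.Jset e ι κ α l true), gg t.1) = ∑ u, gg u := fun gg =>
      Fintype.sum_equiv
        (⟨fun t => t.1, fun u => ⟨u, trivial⟩, fun t => rfl, fun u => rfl⟩ :
          ↥(D.Jset e ι κ α l true) ≃ T l) _ _ (fun t => rfl)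
    -- F maps the radical into the radical
    have hFrad : ∀ x : ↥(D.Jset e ι κ α l false) → R,
        x ∈ radZt l false → Flin x ∈ radW l := by
      intro x hx
      refine hradW2 _ fun u => ?_
      have hsum : ∑ s, Flin x s * φ l s u
          = ∑ t : ↥(D.Jset e ι κ α l false), x t * φ l t.1 u :=
        (Finset.sum_congr rfl fun s _ => by rw [Fapply]).trans (aux_sum_dite x _)
      rw [hsum]
      rcases aux_TpTm D hA hα l u with hu | hu
      · exact (hradZt l false x).1 hx ⟨u, hu⟩
      · exact Finset.sum_eq_zero fun t _ => by
          rw [aux_claimB D hA hφ t.2 hu, mul_zero]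
    set fbar : ((↥(D.Jset e ι κ α l false) → R) ⧸ radZt l false) →ₗ[(↥Asubt)ᵐᵒᵖ]
        ((T l → R) ⧸ radW l) :=
      Submodule.liftQ (radZt l false) (mkW.comp Flin) (fun x hx => by
        rw [LinearMap.mem_ker, LinearMap.comp_apply]
        exact (Submodule.Quotient.mk_eq_zero _).2 (hFrad x hx)) with hfbar
    have hfbar_mk : ∀ x : ↥(D.Jset e ι κ α l false) → R,
        fbar (Quotient.mk'' x) = Submodule.Quotient.mk (Flin x) := fun x => by
      rw [hfbar, Submodule.Quotient.mk''_eq_mk, Submodule.liftQ_apply]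
      rfl
    have finj : Function.Injective fbar := by
      rw [hfbar]
      refine LinearMap.ker_eq_bot.1 (Submodule.ker_liftQ_eq_bot _ _ _ ?_)
      intro x hx
      rw [LinearMap.mem_ker, LinearMap.comp_apply] at hx
      have h1 : Flin x ∈ radW l := (Submodule.Quotient.mk_eq_zero _).1 hx
      rw [hradZt]
      intro s
      have h3 : ∑ u, Flin x u * φ l u s.1
          = ∑ t : ↥(D.Jset e ι κ α l false), x t * φ l t.1 s.1 :=
        (Finset.sum_congr rfl fun w _ => by rw [Fapply]).trans (aux_sum_dite x _)
      rw [← h3]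
      exact hradW1 _ h1 s.1
    -- the restriction map, descended to the quotients
    set g0 : (T l → R) →ₗ[(↥Asubt)ᵐᵒᵖ]
        ((↥(D.Jset e ι κ α l true) → R) ⧸ radZt l true) :=
      (radZt l true).mkQ.comp (Glin.symm : (T l → R) ≃ₗ[(↥Asubt)ᵐᵒᵖ]
        (↥(D.Jset e ι κ α l true) → R)).toLinearMap with hg0
    have hg0rad : ∀ y ∈ radW l, g0 y = 0 := by
      intro y hy
      rw [hg0, LinearMap.comp_apply, Submodule.mkQ_apply]
      refine (Submodule.Quotient.mk_eq_zero _).2 ?_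
      rw [hradZt]
      intro s
      exact (hsumU (fun u => y u * φ l u s.1)).trans (hradW1 _ hy s.1)
    set gbar : ((T l → R) ⧸ radW l) →ₗ[(↥Asubt)ᵐᵒᵖ]
        ((↥(D.Jset e ι κ α l true) → R) ⧸ radZt l true) :=
      { toFun := fun q => Quotient.liftOn' q (fun y => g0 y) (fun y z hyz => by
          have hmem : y - z ∈ radW l := by
            rwa [Submodule.quotientRel_def] at hyz
          have h0 : g0 (y - z) = 0 := hg0rad _ hmem
          rw [map_sub] at h0
          exact sub_eq_zero.1 h0),
        map_add' := fun q r => by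
          obtain ⟨y, rfl⟩ := Submodule.Quotient.mk_surjective _ q
          obtain ⟨z, rfl⟩ := Submodule.Quotient.mk_surjective _ r
          rw [← Submodule.Quotient.mk_add]
          exact map_add g0 y z,
        map_smul' := fun b q => by
          obtain ⟨y, rfl⟩ := Submodule.Quotient.mk_surjective _ q
          rw [← mkW_smul b y]
          exact g0.map_smul b y } with hgbar
    have hgbar_mk : ∀ y : T l → R, gbar (Submodule.Quotient.mk y) = g0 y :=
      fun y => rfl
    have gsurj : Function.Surjective gbar := by
      intro q
      induction q using Quotient.inductionOn' with
      | h y =>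
        refine ⟨Submodule.Quotient.mk (Glin y), ?_⟩
        rw [hgbar_mk, hg0, LinearMap.comp_apply]
        show (radZt l true).mkQ (Glin.symm (Glin y)) = _
        rw [LinearEquiv.symm_apply_apply, Submodule.mkQ_apply,
          ← Submodule.Quotient.mk''_eq_mk]
    refine ⟨fbar, gbar, finj, gsurj, le_antisymm ?_ ?_⟩
    · rintro _ ⟨q, rfl⟩
      induction q using Quotient.inductionOn' with
      | h x =>
        rw [LinearMap.mem_ker, hfbar_mk, hgbar_mk,
          hg0, LinearMap.comp_apply, Submodule.mkQ_apply]
        refine (Submodule.Quotient.mk_eq_zero _).2 ?_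
        rw [hradZt]
        intro s
        refine Finset.sum_eq_zero fun t _ => ?_
        show Flin x t.1 * φ l t.1 s.1 = 0
        rw [Fapply]
        by_cases ht : t.1 ∈ D.Jset e ι κ α l false
        · rw [dif_pos ht, aux_claimB D hA hφ ht s.2, mul_zero]
        · rw [dif_neg ht, zero_mul]
    · intro q hq
      induction q using Quotient.inductionOn' with
      | h y =>
        rw [LinearMap.mem_ker, Submodule.Quotient.mk''_eq_mk, hgbar_mk, hg0,
          LinearMap.comp_apply, Submodule.mkQ_apply] at hq
        have h2 := (hradZt l true _).1 ((Submodule.Quotient.mk_eq_zero _).1 hq)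
        refine ⟨Quotient.mk'' (fun t => y t.1), ?_⟩
        rw [hfbar_mk, Submodule.Quotient.mk''_eq_mk, Submodule.Quotient.eq]
        refine hradW2 _ fun u => ?_
        have hLHS : ∑ s, (Flin (fun t => y t.1) - y) s * φ l s u
            = (∑ t : ↥(D.Jset e ι κ α l false), y t.1 * φ l t.1 u)
              - ∑ s, y s * φ l s u := by
          have hc : ∀ s, (Flin (fun t => y t.1) - y) s * φ l s u
              = (if h : s ∈ D.Jset e ι κ α l false
                  then (fun t : ↥(D.Jset e ι κ α l false) => y t.1) ⟨s, h⟩ else 0)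
                    * φ l s u - y s * φ l s u := by
            intro s
            rw [Pi.sub_apply, Fapply, sub_mul]
          rw [Finset.sum_congr rfl fun s _ => hc s, Finset.sum_sub_distrib,
            aux_sum_dite (fun t : ↥(D.Jset e ι κ α l false) => y t.1) (fun s => φ l s u)]
        rw [hLHS]
        rcases aux_TpTm D hA hα l u with hu | hu
        · have hS2 : ∑ s, y s * φ l s u
              = ∑ t : ↥(D.Jset e ι κ α l false), y t.1 * φ l t.1 u := by
            rw [← aux_sum_dite (fun t : ↥(D.Jset e ι κ α l false) => y t.1)
              (fun s => φ l s u)]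
            refine Finset.sum_congr rfl fun s _ => ?_
            by_cases hs : s ∈ D.Jset e ι κ α l false
            · rw [dif_pos hs]
            · have hsTm : s ∈ D.Tminus e ι κ α l :=
                (aux_TpTm D hA hα l s).resolve_left hs
              rw [dif_neg hs, zero_mul, aux_claimB' D hA hφ hsTm hu, mul_zero]
          rw [hS2, sub_self]
        · have hS1 : ∑ t : ↥(D.Jset e ι κ α l false), y t.1 * φ l t.1 u = 0 :=
            Finset.sum_eq_zero fun t _ => by
              rw [aux_claimB D hA hφ t.2 hu, mul_zero]
          have hS2 : ∑ s, y s * φ l s u = 0 := by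
            rw [← hsumU (fun s => y s * φ l s u)]
            exact h2 ⟨u, hu⟩
          rw [hS1, hS2, sub_self]
end
end
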